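/- arXiv:1307.5780 — 5 statements merged into one kernel-verified Lean document; each statement's English description precedes it below -/
import Mathlib

section
/- Let A and H be abelian p-groups with H acting on A by automorphisms, and let λ be an irreducible (linear) character of A. Let B be an H-invariant subgroup of A of index p. Then either C_H(λ|_B) = C_H(λ), or |C_H(λ|_B)| = p·|C_H(λ)| and the trace character tr_H(λ)(x) = Σ_{h∈H} λ^h(x) vanishes for all x ∈ A \ B. -/
open scoped BigOperators

noncomputable def trChar (H : Type*) {A : Type*} [CommGroup A] [Group H] [Fintype H]
    [MulDistribMulAction H A] (lam : A →* ℂˣ) (x : A) : ℂ :=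
  ∑ h : H, ((lam (h • x) : ℂˣ) : ℂ)

open Classical in
noncomputable def sigmaChar (H : Type*) {A : Type*} [CommGroup A] [Fintype A] [Group H]
    [Fintype H] [MulDistribMulAction H A] (lam : A →* ℂˣ) : ℕ :=
  ∑ x : A, if trChar H lam x ≠ 0 then Nat.card (MulAction.stabilizer H x) else 0

open Classical in
noncomputable def sigmaCharOn (H : Type*) {A : Type*} [CommGroup A] [Fintype A] [Group H]
    [Fintype H] [MulDistribMulAction H A] (B : Subgroup A) (lam : A →* ℂˣ) : ℕ :=
  ∑ x : A, if x ∈ B ∧ trChar H lam x ≠ 0 then Nat.card (MulAction.stabilizer H x) else 0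

def charStab (H : Type*) {A : Type*} [CommGroup A] [Group H] [MulDistribMulAction H A]
    (lam : A →* ℂˣ) : Set H := {h : H | ∀ a : A, lam (h • a) = lam a}

def charStabOn (H : Type*) {A : Type*} [CommGroup A] [Group H] [MulDistribMulAction H A]
    (B : Subgroup A) (lam : A →* ℂˣ) : Set H := {h : H | ∀ a ∈ B, lam (h • a) = lam a}

def stabSub (H : Type*) {A : Type*} [CommGroup A] [Group H] [MulDistribMulAction H A]
    (lam : A →* ℂˣ) : Subgroup H where
  carrier := charStab H lam
  one_mem' := fun a => by rw [one_smul]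
  mul_mem' := fun {h k} hh hk a => by rw [mul_smul, hh, hk]
  inv_mem' := fun {h} hh a => by
    have := hh (h⁻¹ • a); rw [smul_inv_smul] at this; exact this.symm

def stabOnSub (H : Type*) {A : Type*} [CommGroup A] [Group H] [MulDistribMulAction H A]
    (B : Subgroup A) (lam : A →* ℂˣ)
    (hBinv : ∀ (h : H) (a : A), a ∈ B → h • a ∈ B) : Subgroup H where
  carrier := charStabOn H B lam
  one_mem' := fun a _ => by rw [one_smul]
  mul_mem' := fun {h k} hh hk a ha => by
    rw [mul_smul, hh _ (hBinv k a ha), hk a ha]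
  inv_mem' := fun {h} hh a ha => by
    have := hh (h⁻¹ • a) (hBinv h⁻¹ a ha)
    rw [smul_inv_smul] at this; exact this.symm

lemma smul_div_mem {p : ℕ} (hp : p.Prime) {A H : Type} [CommGroup A] [Fintype A]
    [CommGroup H] [Fintype H] [MulDistribMulAction H A]
    (hH : IsPGroup p H) (B : Subgroup A)
    (hBinv : ∀ (h : H) (a : A), a ∈ B → h • a ∈ B) (hBidx : B.index = p)
    (h : H) (x : A) : ((h • x : A) : A ⧸ B) = (x : A ⧸ B) := by
  haveI : Fact p.Prime := ⟨hp⟩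
  have hcard : Nat.card (A ⧸ B) = p := by rw [← Subgroup.index_eq_card]; exact hBidx
  haveI : IsCyclic (A ⧸ B) := isCyclic_of_prime_card hcard
  obtain ⟨g, hg⟩ := IsCyclic.exists_generator (α := A ⧸ B)
  set f : A →* A := MulDistribMulAction.toMonoidHom A h with hf
  have hle : B ≤ B.comap f := fun b hb => hBinv h b hb
  set ψ : A ⧸ B →* A ⧸ B := QuotientGroup.map B B f hle with hψdef
  have hψmk : ∀ a : A, ψ (a : A ⧸ B) = ((h • a : A) : A ⧸ B) := fun a => rfl
  obtain ⟨m, hm⟩ := Subgroup.mem_zpowers_iff.mp (hg (ψ g))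
  have hψ : ∀ q : A ⧸ B, ψ q = q ^ m := by
    intro q
    obtain ⟨n, hn⟩ := Subgroup.mem_zpowers_iff.mp (hg q)
    calc ψ q = ψ (g ^ n) := by rw [hn]
      _ = (ψ g) ^ n := map_zpow ψ g n
      _ = (g ^ m) ^ n := by rw [hm]
      _ = (g ^ n) ^ m := by rw [← zpow_mul, ← zpow_mul, mul_comm]
      _ = q ^ m := by rw [hn]
  obtain ⟨k, hk⟩ := hH h
  have iter : ∀ (n : ℕ) (a : A), ((h ^ n • a : A) : A ⧸ B) = ((a : A ⧸ B)) ^ (m ^ n) := by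
    intro n
    induction n with
    | zero => intro a; simp
    | succ n ih =>
      intro a
      have h1 : h ^ (n + 1) • a = h ^ n • (h • a) := by rw [pow_succ, mul_smul]
      rw [h1, ih (h • a), ← hψmk a, hψ, ← zpow_mul, ← pow_succ']
  -- the generator satisfies g ^ (m ^ (p ^ k)) = g
  obtain ⟨a₀, ha₀⟩ := QuotientGroup.mk_surjective g
  have hgfix : g ^ ((m : ℤ) ^ (p ^ k)) = g := by
    rw [← ha₀, ← iter (p ^ k) a₀, hk, one_smul]
  have hgord : orderOf g = p := by
    have hne : g ≠ 1 := by
      intro hg1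
      have : ∀ q : A ⧸ B, q = 1 := by
        intro q
        obtain ⟨n, hn⟩ := Subgroup.mem_zpowers_iff.mp (hg q)
        rw [← hn, hg1, one_zpow]
      have : Nat.card (A ⧸ B) = 1 := by
        haveI : Subsingleton (A ⧸ B) := ⟨fun a b => by rw [this a, this b]⟩
        exact Nat.card_eq_one_iff_unique.mpr ⟨inferInstance, ⟨1⟩⟩
      rw [hcard] at this; exact hp.one_lt.ne' this
    exact orderOf_eq_prime (by rw [← hcard]; exact pow_card_eq_one') hne
  have hdvd1 : (p : ℤ) ∣ m ^ (p ^ k) - 1 := by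
    have : g ^ ((m : ℤ) ^ (p ^ k) - 1) = 1 := by
      rw [zpow_sub, hgfix, zpow_one, mul_inv_cancel]
    have h2 := orderOf_dvd_iff_zpow_eq_one.mpr this
    rw [hgord] at h2
    exact_mod_cast h2
  have hm1 : (p : ℤ) ∣ m - 1 := by
    have hz : ((m : ZMod p)) ^ (p ^ k) = 1 := by
      have := (ZMod.intCast_zmod_eq_zero_iff_dvd (m ^ (p ^ k) - 1) p).mpr hdvd1
      push_cast at this
      linear_combination this
    have frob : ∀ (j : ℕ) (a : ZMod p), a ^ (p ^ j) = a := by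
      intro j
      induction j with
      | zero => intro a; simp
      | succ j ih => intro a; rw [pow_succ, pow_mul, ih, ZMod.pow_card]
    have : ((m : ZMod p)) = 1 := by rw [← frob k (m : ZMod p), hz]
    apply (ZMod.intCast_zmod_eq_zero_iff_dvd (m - 1) p).mp
    push_cast
    rw [this]; ring
  -- conclude
  have : ((x : A ⧸ B)) ^ (m - 1) = 1 := by
    apply orderOf_dvd_iff_zpow_eq_one.mp
    calc (orderOf ((x : A ⧸ B)) : ℤ) ∣ (p : ℤ) := by
          exact_mod_cast hcard ▸ orderOf_dvd_natCard _
      _ ∣ m - 1 := hm1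
  rw [← hψmk, hψ]
  calc (x : A ⧸ B) ^ m = (x : A ⧸ B) ^ (1 + (m - 1)) := by ring_nf
    _ = (x : A ⧸ B) := by rw [zpow_add, zpow_one, this, mul_one]

theorem stmt1 {p : ℕ} (hp : p.Prime) {A H : Type} [CommGroup A] [Fintype A]
    [CommGroup H] [Fintype H] [MulDistribMulAction H A]
    (hA : IsPGroup p A) (hH : IsPGroup p H)
    (lam : A →* ℂˣ) (B : Subgroup A)
    (hBinv : ∀ (h : H) (a : A), a ∈ B → h • a ∈ B) (hBidx : B.index = p) :
    charStabOn H B lam = charStab H lam ∨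
      (Nat.card (charStabOn H B lam) = p * Nat.card (charStab H lam) ∧
        ∀ x : A, x ∉ B → trChar H lam x = 0) := by
  classical
  haveI : Fact p.Prime := ⟨hp⟩
  set S : Subgroup H := stabOnSub H B lam hBinv with hSdef
  set T : Subgroup H := stabSub H lam with hTdef
  have hmemS : ∀ g : H, g ∈ S ↔ ∀ a ∈ B, lam (g • a) = lam a := fun g => Iff.rfl
  have hmemT : ∀ g : H, g ∈ T ↔ ∀ a : A, lam (g • a) = lam a := fun g => Iff.rfl
  have hcardQ : Nat.card (A ⧸ B) = p := by rw [← Subgroup.index_eq_card]; exact hBidx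
  -- pick x₀ ∉ B
  obtain ⟨x₀, hx₀⟩ : ∃ x₀ : A, x₀ ∉ B := by
    by_contra hc; push_neg at hc
    have : B = ⊤ := by ext x; simp [hc x]
    rw [this, Subgroup.index_top] at hBidx
    exact hp.one_lt.ne' hBidx.symm
  have hmkx₀ : ((x₀ : A ⧸ B)) ≠ 1 := by
    simpa [QuotientGroup.eq_one_iff] using hx₀
  have hpow : ((x₀ : A ⧸ B)) ^ p = 1 := by rw [← hcardQ]; exact pow_card_eq_one'
  have hordx₀ : orderOf ((x₀ : A ⧸ B)) = p := orderOf_eq_prime hpow hmkx₀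
  have hx₀p : x₀ ^ p ∈ B := by
    have h1 : ((x₀ ^ p : A) : A ⧸ B) = 1 := hpow
    exact (QuotientGroup.eq_one_iff _).mp h1
  have hgen : ∀ q : A ⧸ B, ∃ n : ℤ, q = ((x₀ : A ⧸ B)) ^ n := by
    have htop : Subgroup.zpowers ((x₀ : A ⧸ B)) = ⊤ := by
      apply Subgroup.eq_top_of_card_eq
      rw [Nat.card_zpowers, hordx₀, hcardQ]
    intro q
    obtain ⟨n, hn⟩ := Subgroup.mem_zpowers_iff.mp (htop ▸ Subgroup.mem_top q)
    exact ⟨n, hn.symm⟩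
  have hdec : ∀ a : A, ∃ (n : ℤ) (b : A), b ∈ B ∧ a = x₀ ^ n * b := by
    intro a
    obtain ⟨n, hn⟩ := hgen (a : A ⧸ B)
    refine ⟨n, (x₀ ^ n)⁻¹ * a, ?_, by group⟩
    apply QuotientGroup.eq.mp
    rw [show ((x₀ ^ n : A) : A ⧸ B) = ((x₀ : A ⧸ B)) ^ n from map_zpow (QuotientGroup.mk' B) x₀ n, hn]
  have key : ∀ g ∈ S, ∀ (a : A) (n : ℤ) (b : A), b ∈ B → a = x₀ ^ n * b →
      lam (g • a) = (lam (g • x₀) * (lam x₀)⁻¹) ^ n * lam a := by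
    intro g hg a n b hb hab
    subst hab
    have hz : g • (x₀ ^ n) = (g • x₀) ^ n := by
      have := map_zpow (MulDistribMulAction.toMonoidHom A g) x₀ n
      simpa [MulDistribMulAction.toMonoidHom_apply] using this
    rw [smul_mul', hz, map_mul, map_mul, map_zpow, map_zpow, hg b hb,
      mul_zpow, inv_zpow, ← map_zpow, ← map_zpow, mul_assoc, inv_mul_cancel_left]
  have hEp : ∀ g ∈ S, (lam (g • x₀) * (lam x₀)⁻¹) ^ p = 1 := by
    intro g hg
    have h1 : g • (x₀ ^ p) = (g • x₀) ^ p := smul_pow' g x₀ p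
    have h2 : lam ((g • x₀) ^ p) = lam (x₀ ^ p) := by rw [← h1]; exact hg _ hx₀p
    calc (lam (g • x₀) * (lam x₀)⁻¹) ^ p
        = lam ((g • x₀) ^ p) * (lam (x₀ ^ p))⁻¹ := by
          rw [mul_pow, inv_pow, map_pow, map_pow]
      _ = 1 := by rw [h2, mul_inv_cancel]
  have hfull : ∀ g : H, g ∈ S → lam (g • x₀) = lam x₀ → ∀ a : A, lam (g • a) = lam a := by
    intro g hg hgx a
    obtain ⟨n, b, hb, hab⟩ := hdec a
    have := key g hg a n b hb hab
    rwa [hgx, mul_inv_cancel, one_zpow, one_mul] at this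
  by_cases hcase : ∀ g ∈ S, lam (g • x₀) = lam x₀
  · left
    ext g
    constructor
    · intro hg
      exact hfull g hg (hcase g hg)
    · intro hg a _
      exact hg a
  · right
    push_neg at hcase
    obtain ⟨h₀, hh₀S, hh₀⟩ := hcase
    set E : ℂˣ := lam (h₀ • x₀) * (lam x₀)⁻¹ with hEdef
    have hE1 : E ≠ 1 := by
      intro hc; apply hh₀; rwa [mul_inv_eq_one] at hc
    have hordE : orderOf E = p := orderOf_eq_prime (hEp h₀ hh₀S) hE1
    constructor
    · -- cardinality
      let e : S →* ℂˣ :=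
        { toFun := fun g => lam ((g : H) • x₀) * (lam x₀)⁻¹
          map_one' := by simp
          map_mul' := by
            intro g k
            have hmk := smul_div_mem hp hH B hBinv hBidx (k : H) x₀
            have hbmem : x₀⁻¹ * ((k : H) • x₀) ∈ B := QuotientGroup.eq.mp hmk.symm
            have hkb : (k : H) • x₀ = x₀ * (x₀⁻¹ * ((k : H) • x₀)) := by group
            show lam (((g * k : S) : H) • x₀) * (lam x₀)⁻¹ =
              (lam ((g : H) • x₀) * (lam x₀)⁻¹) * (lam ((k : H) • x₀) * (lam x₀)⁻¹)
            have hmul : ((g * k : S) : H) • x₀ = (g : H) • ((k : H) • x₀) := by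
              rw [Subgroup.coe_mul, mul_smul]
            rw [hmul, hkb, smul_mul', map_mul, g.2 _ hbmem, hkb]
            simp [map_mul, map_inv, mul_comm, mul_left_comm, mul_assoc] }
      have heapp : ∀ g : S, e g = lam ((g : H) • x₀) * (lam x₀)⁻¹ := fun g => rfl
      have hrange : e.range = Subgroup.zpowers E := by
        apply le_antisymm
        · rintro z ⟨g, rfl⟩
          have hz : (e g) ^ p = 1 := hEp (g : H) g.2
          have hprim : IsPrimitiveRoot ((E : ℂ)) p :=
            IsPrimitiveRoot.coe_units_iff.mpr (hordE ▸ IsPrimitiveRoot.orderOf E)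
          have hzc : ((e g : ℂ)) ^ p = 1 := by
            rw [← Units.val_pow_eq_pow_val, hz, Units.val_one]
          obtain ⟨i, _, hi⟩ := hprim.eq_pow_of_pow_eq_one hzc
          refine Subgroup.mem_zpowers_iff.mpr ⟨(i : ℤ), ?_⟩
          rw [zpow_natCast]
          exact Units.ext (by simpa using hi)
        · rw [Subgroup.zpowers_le]
          exact ⟨⟨h₀, hh₀S⟩, rfl⟩
      have hcr : Nat.card e.range = p := by
        rw [hrange, Nat.card_zpowers, hordE]
      have hTS : ∀ g : H, g ∈ T → g ∈ S := fun g hg a _ => hg a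
      have hker : Nat.card e.ker = Nat.card T := by
        apply Nat.card_congr
        refine
          { toFun := fun g => ⟨((g : S) : H), ?_⟩
            invFun := fun t => ⟨⟨(t : H), hTS _ t.2⟩, ?_⟩
            left_inv := fun g => by apply Subtype.ext; apply Subtype.ext; rfl
            right_inv := fun t => by apply Subtype.ext; rfl }
        · have h1 : e g.1 = 1 := g.2
          rw [heapp, mul_inv_eq_one] at h1
          exact hfull _ g.1.2 h1
        · show e _ = 1
          rw [heapp, mul_inv_eq_one]
          exact t.2 x₀
      have hScard : Nat.card S = Nat.card (S ⧸ e.ker) * Nat.card e.ker :=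
        Subgroup.card_eq_card_quotient_mul_card_subgroup e.ker
      have hq : Nat.card (S ⧸ e.ker) = Nat.card e.range :=
        Nat.card_congr (QuotientGroup.quotientKerEquivRange e).toEquiv
      have e1 : Nat.card (charStabOn H B lam) = Nat.card S := rfl
      have e2 : Nat.card (charStab H lam) = Nat.card T := rfl
      rw [e1, e2, hScard, hq, hcr, hker]
    · -- trace vanishing
      intro x hx
      obtain ⟨n, b, hb, hab⟩ := hdec x
      have hnd : ¬ ((p : ℤ) ∣ n) := by
        intro hdvd
        apply hx
        obtain ⟨t, rfl⟩ := hdvd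
        have hxx : x₀ ^ ((p : ℤ) * t) = (x₀ ^ p) ^ t := by
          rw [zpow_mul, zpow_natCast]
        rw [hab, hxx]
        exact B.mul_mem (B.zpow_mem hx₀p t) hb
      have hEn : E ^ n ≠ 1 := by
        intro hc
        have := orderOf_dvd_iff_zpow_eq_one.mpr hc
        rw [hordE] at this
        exact hnd this
      have hcoef : ∀ h : H, lam (h₀ • (h • x)) = E ^ n * lam (h • x) := by
        intro h
        have hmk : ((h • x : A) : A ⧸ B) = (x : A ⧸ B) :=
          smul_div_mem hp hH B hBinv hBidx h x
        have hb' : (x₀ ^ n)⁻¹ * (h • x) ∈ B := by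
          apply QuotientGroup.eq.mp
          rw [hmk, hab, QuotientGroup.mk_mul, (QuotientGroup.eq_one_iff b).mpr hb, mul_one]
        exact key h₀ hh₀S (h • x) n _ hb' (by group)
      have hstep : trChar H lam x = ((E ^ n : ℂˣ) : ℂ) * trChar H lam x := by
        unfold trChar
        rw [Finset.mul_sum]
        refine Fintype.sum_equiv (Equiv.mulLeft h₀⁻¹) _ _ ?_
        intro h
        have h1 : h • x = h₀ • ((h₀⁻¹ * h) • x) := by rw [← mul_smul, mul_inv_cancel_left]
        show ((lam (h • x) : ℂˣ) : ℂ) = ((E ^ n : ℂˣ) : ℂ) * ((lam ((h₀⁻¹ * h) • x) : ℂˣ) : ℂ)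
        rw [h1, hcoef (h₀⁻¹ * h), Units.val_mul]
      by_contra h0
      have heq : ((E ^ n : ℂˣ) : ℂ) = 1 := by
        have h2 : ((E ^ n : ℂˣ) : ℂ) * trChar H lam x = 1 * trChar H lam x := by
          rw [one_mul, ← hstep]
        exact mul_right_cancel₀ h0 h2
      exact hEn (Units.ext (by simpa using heq))
end

section
/- Let G be a finite group, χ ∈ Irr(G), and N a normal subgroup of G such that the restriction χ|_N is irreducible. Then for every x ∈ G, |χ(x)|² = (χ(1)/|N|) · Σ_{g∈N} χ([x,g]). -/
open scoped BigOperators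

noncomputable def IsIrreducibleCharacter (G : Type) [Group G] (χ : G → ℂ) : Prop :=
  ∃ V : FDRep ℂ G, CategoryTheory.Simple V ∧ ∀ g : G, FDRep.character V g = χ g

open Classical in
noncomputable def inducedChar {G : Type} [Group G] [Fintype G] (K : Subgroup G)
    (θ : K → ℂ) : G → ℂ := fun g =>
  (Nat.card K : ℂ)⁻¹ * ∑ x : G, if h : x⁻¹ * g * x ∈ K then θ ⟨x⁻¹ * g * x, h⟩ else 0

open Module Polynomial in
/-- If `f ^ n = 1` then the trace of `f ^ (n - 1)` (i.e. of `f⁻¹`) is the complex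
conjugate of the trace of `f`. -/
lemma trace_pow_pred_eq_conj_trace {V : Type*} [AddCommGroup V] [Module ℂ V]
    [FiniteDimensional ℂ V] {f : Module.End ℂ V} {n : ℕ} (hn : n ≠ 0) (hf : f ^ n = 1) :
    LinearMap.trace ℂ V (f ^ (n - 1)) = (starRingEnd ℂ) (LinearMap.trace ℂ V f) := by
  classical
  have hss : f.IsSemisimple := by
    apply Module.End.isSemisimple_of_squarefree_aeval_eq_zero (p := X ^ n - 1)
    · exact (Polynomial.X_pow_sub_one_separable_iff.mpr
        (by exact_mod_cast (Nat.cast_ne_zero (R := ℂ)).mpr hn)).squarefree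
    · simp [map_sub, hf]
  set s : Finset ℂ := (Polynomial.nthRoots n (1 : ℂ)).toFinset with hs
  have hroot : ∀ μ : ℂ, μ ∈ s ↔ μ ^ n = 1 := fun μ => by
    simp [hs, Polynomial.mem_nthRoots (Nat.pos_of_ne_zero hn)]
  have hpowv : ∀ (μ : ℂ) (v : V), f v = μ • v → ∀ k : ℕ, (f ^ k) v = μ ^ k • v := by
    intro μ v hv k
    induction k with
    | zero => simp
    | succ k ih =>
        rw [pow_succ, pow_succ, Module.End.mul_apply, hv, map_smul, ih, smul_smul, mul_comm]
  have hbot : ∀ μ : ℂ, μ ∉ s → f.eigenspace μ = ⊥ := by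
    intro μ hμ
    by_contra h
    obtain ⟨v, hv, hv0⟩ := (Submodule.ne_bot_iff _).mp h
    have hfv : f v = μ • v := Module.End.mem_eigenspace_iff.mp hv
    have hpow : (f ^ n) v = μ ^ n • v := hpowv μ v hfv n
    rw [hf] at hpow
    have : μ ^ n = 1 := by
      by_contra hne
      have : (μ ^ n - 1) • v = 0 := by
        rw [sub_smul, one_smul, ← hpow]; simp
      exact hv0 ((smul_eq_zero.mp this).resolve_left (sub_ne_zero.mpr hne))
    exact hμ ((hroot μ).mpr this)
  have hsup : ⨆ μ : s, f.eigenspace μ.1 = ⊤ := by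
    refine le_antisymm le_top ?_
    have h1 : ∀ μ : ℂ, f.eigenspace μ ≤ ⨆ ν : s, f.eigenspace ν.1 := fun μ => by
      by_cases hμ : μ ∈ s
      · exact le_iSup (fun ν : s => f.eigenspace ν.1) ⟨μ, hμ⟩
      · rw [hbot μ hμ]; exact bot_le
    have h2 : ⨆ μ : ℂ, f.eigenspace μ = ⊤ := by
      have h3 := Module.End.iSup_maxGenEigenspace_eq_top f
      have h4 : ∀ μ : ℂ, f.maxGenEigenspace μ = f.eigenspace μ := fun μ =>
        hss.isFinitelySemisimple.maxGenEigenspace_eq_eigenspace μ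
      simpa only [h4] using h3
    rw [← h2]
    exact iSup_le h1
  have hind : iSupIndep (fun μ : s => f.eigenspace μ.1) :=
    f.eigenspaces_iSupIndep.comp Subtype.val_injective
  have hint : DirectSum.IsInternal (fun μ : s => f.eigenspace μ.1) :=
    DirectSum.isInternal_submodule_of_iSupIndep_of_iSup_eq_top hind hsup
  let b := hint.collectedBasis (fun μ : s => finBasis ℂ (f.eigenspace μ.1))
  have hb : ∀ i, b i ∈ f.eigenspace i.1.1 := by
    intro i
    rw [hint.collectedBasis_coe]
    exact Subtype.mem _
  have hdiag : ∀ (g : Module.End ℂ V) (μ : ℂ) i, g (b i) = μ • b i →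
      (LinearMap.toMatrix b b g) i i = μ := by
    intro g μ i hg
    rw [LinearMap.toMatrix_apply, hg, map_smul, Basis.repr_self]
    simp
  rw [LinearMap.trace_eq_matrix_trace ℂ b, LinearMap.trace_eq_matrix_trace ℂ b,
    Matrix.trace, Matrix.trace, map_sum]
  refine Finset.sum_congr rfl fun i _ => ?_
  simp only [Matrix.diag_apply]
  have hfb : f (b i) = i.1.1 • b i := by
    have := Module.End.mem_eigenspace_iff.mp (hb i)
    simpa using this
  have hμn : (i.1.1 : ℂ) ^ n = 1 := (hroot _).mp i.1.2
  have hμ0 : (i.1.1 : ℂ) ≠ 0 := by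
    intro h0
    rw [h0, zero_pow hn] at hμn
    exact zero_ne_one hμn
  have habs : ‖(i.1.1 : ℂ)‖ = 1 := by
    have h1 : ‖(i.1.1 : ℂ)‖ ^ n = 1 := by
      rw [← norm_pow, hμn, norm_one]
    rcases lt_trichotomy ‖(i.1.1 : ℂ)‖ 1 with h | h | h
    · have := pow_lt_one₀ (norm_nonneg _) h hn; linarith
    · exact h
    · have := one_lt_pow₀ h hn; linarith
  rw [hdiag f i.1.1 i hfb, hdiag (f ^ (n - 1)) (i.1.1 ^ (n - 1)) i (hpowv _ _ hfb (n - 1))]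
  have h2 : i.1.1 * i.1.1 ^ (n - 1) = 1 := by
    rw [← pow_succ', Nat.sub_add_cancel (Nat.one_le_iff_ne_zero.mpr hn), hμn]
  have h3 : i.1.1 * (starRingEnd ℂ) i.1.1 = 1 := by
    rw [Complex.mul_conj, Complex.normSq_eq_norm_sq, habs]
    norm_num
  exact mul_left_cancel₀ hμ0 (h2.trans h3.symm)
open Classical in
theorem stmt10 {G : Type} [Group G] [Fintype G] (χ : G → ℂ)
    (hχ : IsIrreducibleCharacter G χ) (N : Subgroup G) (hN : N.Normal)
    (hres : IsIrreducibleCharacter N (fun n : N => χ n)) (x : G) :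
    (‖χ x‖ : ℂ) ^ 2
      = χ 1 / (Nat.card N : ℂ) * ∑ g : N, χ (x⁻¹ * (g : G)⁻¹ * x * g) := by
  obtain ⟨V, hVs, hVchar⟩ := hχ
  obtain ⟨W, hWs, hWchar⟩ := hres
  haveI := hVs
  haveI := hWs
  letI : Invertible ((Fintype.card ↥N : ℂ)) :=
    invertibleOfNonzero (Nat.cast_ne_zero.mpr Fintype.card_ne_zero)
  set ρN : Representation ℂ ↥N V := V.ρ.comp N.subtype with hρN
  have hρNapp : ∀ m : ↥N, ρN m = V.ρ ↑m := fun m => rfl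
  have hchr : ∀ a : G, LinearMap.trace ℂ V (V.ρ a) = χ a := fun a => hVchar a
  have hUchar : ∀ m : ↥N, (FDRep.of ρN).character m = χ ↑m := fun m => hVchar ↑m
  have hA : ⅟(Fintype.card ↥N : ℂ) • ∑ n : ↥N, χ ↑(n⁻¹) * χ ↑n
      = (Module.finrank ℂ (Representation.linHom ρN ρN).invariants : ℂ) := by
    have h := FDRep.average_char_eq_finrank_invariants
      (FDRep.of (Representation.linHom ρN ρN))
    calc ⅟(Fintype.card ↥N : ℂ) • ∑ n : ↥N, χ ↑(n⁻¹) * χ ↑n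
        = ⅟(Fintype.card ↥N : ℂ) •
            ∑ n : ↥N, (FDRep.of (Representation.linHom ρN ρN)).character n := by
          rw [Finset.sum_congr rfl fun n _ =>
            ((FDRep.char_linHom (FDRep.of ρN) (FDRep.of ρN) n).trans
              (by rw [hUchar, hUchar])).symm]
          rfl
      _ = (Module.finrank ℂ (Representation.linHom ρN ρN).invariants : ℂ) := by
          rw [invOf_eq_inv, smul_eq_mul, ← Nat.card_eq_fintype_card]; exact h
  have hB : ⅟(Fintype.card ↥N : ℂ) • ∑ n : ↥N, χ ↑(n⁻¹) * χ ↑n = 1 := by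
    have h := FDRep.average_char_eq_finrank_invariants
      (FDRep.of (Representation.linHom W.ρ W.ρ))
    have h2 : ∀ n : ↥N, (FDRep.of (Representation.linHom W.ρ W.ρ)).character n
        = χ ↑(n⁻¹) * χ ↑n := fun n => by
      have h3 := FDRep.char_linHom W W n
      rw [h3, hWchar, hWchar]
    have h4 : Module.finrank ℂ (Representation.linHom W.ρ W.ρ).invariants = 1 := by
      rw [(Representation.linHom.invariantsEquivFDRepHom W W).finrank_eq,
        CategoryTheory.finrank_hom_simple_simple ℂ W W, if_pos ⟨CategoryTheory.Iso.refl W⟩]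
    calc ⅟(Fintype.card ↥N : ℂ) • ∑ n : ↥N, χ ↑(n⁻¹) * χ ↑n
        = ⅟(Fintype.card ↥N : ℂ) •
          ∑ n : ↥N, (FDRep.of (Representation.linHom W.ρ W.ρ)).character n := by
          rw [Finset.sum_congr rfl fun n _ => (h2 n)]
      _ = (Module.finrank ℂ (Representation.linHom W.ρ W.ρ).invariants : ℂ) := by
          rw [invOf_eq_inv, smul_eq_mul, ← Nat.card_eq_fintype_card]; exact h
      _ = 1 := by rw [h4]; norm_num
  have hd1 : Module.finrank ℂ (Representation.linHom ρN ρN).invariants = 1 := by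
    have h := hA.symm.trans hB
    exact_mod_cast h
  have hid : (1 : Module.End ℂ V) ≠ 0 := by
    intro h
    have hv : ∀ v : V, v = 0 := fun v => by simpa using LinearMap.congr_fun h v
    haveI : Subsingleton V := ⟨fun a b => by rw [hv a, hv b]⟩
    haveI : Subsingleton (V →ₗ[ℂ] V) := inferInstance
    have : Module.finrank ℂ (Representation.linHom ρN ρN).invariants = 0 :=
      Module.finrank_zero_of_subsingleton
    omega
  set M : Module.End ℂ V := ∑ g : ↥N, V.ρ ((↑g)⁻¹ * x * ↑g) with hMdef
  have hMS : M ∈ (Representation.linHom ρN ρN).invariants := by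
    rw [Representation.mem_invariants]
    intro n
    rw [Representation.linHom_apply, ← Module.End.mul_eq_comp, ← Module.End.mul_eq_comp,
      hMdef, Finset.sum_mul, Finset.mul_sum]
    refine Fintype.sum_equiv (Equiv.mulRight n⁻¹) _ _ fun g => ?_
    rw [hρNapp, hρNapp, ← map_mul, ← map_mul]
    congr 1
    simp only [Equiv.coe_mulRight, Subgroup.coe_mul, InvMemClass.coe_inv, mul_inv_rev]
    group
  have h1S : (1 : Module.End ℂ V) ∈ (Representation.linHom ρN ρN).invariants := by
    rw [Representation.mem_invariants]
    intro n
    rw [Representation.linHom_apply, ← Module.End.mul_eq_comp, ← Module.End.mul_eq_comp,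
      one_mul, hρNapp, hρNapp, ← map_mul]
    simp
  obtain ⟨c, hc⟩ : ∃ c : ℂ, M = c • (1 : Module.End ℂ V) := by
    have hv : (⟨1, h1S⟩ : (Representation.linHom ρN ρN).invariants) ≠ 0 := by
      simp only [ne_eq, Submodule.mk_eq_zero]
      exact hid
    have hspan := (finrank_eq_one_iff_of_nonzero
      (⟨1, h1S⟩ : (Representation.linHom ρN ρN).invariants) hv).mp hd1
    have hmem : (⟨M, hMS⟩ : (Representation.linHom ρN ρN).invariants)
        ∈ Submodule.span ℂ {(⟨1, h1S⟩ : (Representation.linHom ρN ρN).invariants)} := by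
      rw [hspan]; trivial
    obtain ⟨c, hc⟩ := Submodule.mem_span_singleton.mp hmem
    refine ⟨c, ?_⟩
    have := congrArg Subtype.val hc
    simpa using this.symm
  have htr1 : LinearMap.trace ℂ V (1 : Module.End ℂ V) = χ 1 := by
    rw [← hchr 1, map_one V.ρ]
  have htrM : LinearMap.trace ℂ V M = (Fintype.card ↥N : ℂ) * χ x := by
    rw [hMdef, map_sum]
    have h1 : ∀ g : ↥N, LinearMap.trace ℂ V (V.ρ ((↑g)⁻¹ * x * ↑g)) = χ x := fun g => by
      have h2 : V.character ((↑g)⁻¹ * x * ((↑g)⁻¹)⁻¹) = V.character x :=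
        FDRep.char_conj V x (↑g)⁻¹
      rw [inv_inv] at h2
      exact h2.trans (hVchar x)
    rw [Finset.sum_congr rfl fun g _ => h1 g, Finset.sum_const, Finset.card_univ,
      nsmul_eq_mul]
  have hcval : c * χ 1 = (Fintype.card ↥N : ℂ) * χ x := by
    rw [← htrM, hc, map_smul, htr1, smul_eq_mul]
  have hsum : ∑ g : N, χ (x⁻¹ * (g : G)⁻¹ * x * g) = c * χ x⁻¹ := by
    have h1 : ∀ g : ↥N, χ (x⁻¹ * (g : G)⁻¹ * x * g)
        = LinearMap.trace ℂ V (V.ρ x⁻¹ * V.ρ ((↑g)⁻¹ * x * ↑g)) := fun g => by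
      rw [← map_mul, hchr]
      congr 1
      group
    rw [Finset.sum_congr rfl fun g _ => h1 g, ← map_sum, ← Finset.mul_sum, ← hMdef, hc,
      mul_smul_comm, mul_one, map_smul, hchr, smul_eq_mul]
  have hconj : χ x⁻¹ = (starRingEnd ℂ) (χ x) := by
    have hcard : x ^ Fintype.card G = 1 := pow_card_eq_one
    have hfpow : (V.ρ x) ^ Fintype.card G = 1 := by rw [← map_pow, hcard, map_one]
    have h1 := trace_pow_pred_eq_conj_trace (f := V.ρ x) (n := Fintype.card G)
      Fintype.card_ne_zero hfpow
    have h2 : V.ρ x⁻¹ = (V.ρ x) ^ (Fintype.card G - 1) := by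
      rw [← map_pow]
      congr 1
      refine (eq_inv_of_mul_eq_one_left ?_).symm
      rw [← pow_succ, Nat.sub_add_cancel (Nat.one_le_iff_ne_zero.mpr Fintype.card_ne_zero),
        hcard]
    rw [← hchr x⁻¹, h2, h1, hchr]
  have hχ1 : χ 1 ≠ 0 := by
    intro h
    rw [← hVchar 1, FDRep.char_one] at h
    have h0 : Module.finrank ℂ V = 0 := by exact_mod_cast h
    haveI := Module.finrank_zero_iff.mp h0
    exact hid (Subsingleton.elim _ _)
  have hNcard : (Fintype.card ↥N : ℂ) ≠ 0 := Nat.cast_ne_zero.mpr Fintype.card_ne_zero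
  have hLHS : ((‖χ x‖ : ℝ) : ℂ) ^ 2 = χ x * (starRingEnd ℂ) (χ x) := by
    rw [Complex.mul_conj, Complex.normSq_eq_norm_sq]
    norm_cast
  rw [hLHS, Nat.card_eq_fintype_card, hsum, hconj]
  field_simp
  linear_combination -(starRingEnd ℂ) (χ x) * hcval
end

section
/- Let P be a p-group of nilpotence class at most 3 and χ a faithful irreducible character of P. Then the support Supp(χ) = {g ∈ P : χ(g) ≠ 0} contains exactly |P|/χ(1)² conjugacy classes of P. -/
open scoped commutatorElement

namespace Stmt13Helper


variable {P : Type} [Group P]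

lemma comm_expand (a b c : P) : ⁅a, b*c⁆ = ⁅a,b⁆ * (b * ⁅a,c⁆ * b⁻¹) := by
  simp only [commutatorElement_def]; group

lemma comm_expand_left (a b c : P) : ⁅a*b, c⁆ = (a * ⁅b,c⁆ * a⁻¹) * ⁅a,c⁆ := by
  simp only [commutatorElement_def]; group

lemma central_conj {z : P} (hz : z ∈ Subgroup.center P) (b : P) : b * z * b⁻¹ = z := by
  rw [Subgroup.mem_center_iff.mp hz b]; group

lemma central_swap {z : P} (hz : z ∈ Subgroup.center P) (b : P) : b * z = z * b :=
  Subgroup.mem_center_iff.mp hz b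

/-- `mm g u = g * u⁻¹ * g⁻¹ * u`. -/
def mm (g u : P) : P := g * u⁻¹ * g⁻¹ * u

/-- `zz g v w = ⁅⁅g⁻¹, v⁻¹⁆, w⁻¹⁆`. -/
def zz (g v w : P) : P := ⁅⁅g⁻¹, v⁻¹⁆, w⁻¹⁆

lemma mi_identity (g v w : P) :
    (mm g v)⁻¹ * mm g (v*w) = g * zz g v w * g⁻¹ * mm g w := by
  simp only [mm, zz, commutatorElement_def]; group

lemma mm_one_of_comm {g w : P} (h : g * w = w * g) : mm g w = 1 := by
  have : g * w * (w * g)⁻¹ = 1 := by rw [h]; group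
  simp only [mm]
  calc g * w⁻¹ * g⁻¹ * w = w⁻¹ * (w * g * w⁻¹ * g⁻¹) * w := by group
  _ = w⁻¹ * (g * w * w⁻¹ * g⁻¹) * w := by rw [← h]
  _ = 1 := by group

section Hc
variable (Hc : ∀ x y z : P, ⁅⁅x,y⁆,z⁆ ∈ Subgroup.center P)
include Hc

lemma hom2 (x y u₁ u₂ : P) : ⁅⁅x,y⁆,u₁*u₂⁆ = ⁅⁅x,y⁆,u₁⁆ * ⁅⁅x,y⁆,u₂⁆ := by
  rw [comm_expand, central_conj (Hc x y u₂) u₁]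

lemma hominv (x y u : P) : ⁅⁅x,y⁆,u⁻¹⁆ = ⁅⁅x,y⁆,u⁆⁻¹ := by
  have h := hom2 Hc x y u⁻¹ u
  simp only [inv_mul_cancel] at h
  rw [commutatorElement_one_right] at h
  exact eq_inv_of_mul_eq_one_left h.symm

lemma hcc (x y z t : P) : ⁅⁅x,y⁆,⁅z,t⁆⁆ = 1 := by
  rw [show ⁅z,t⁆ = z * (t * (z⁻¹ * t⁻¹)) by simp [commutatorElement_def, mul_assoc]]
  rw [hom2 Hc, hom2 Hc, hom2 Hc, hominv Hc, hominv Hc]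
  have hA : ⁅⁅x,y⁆,z⁆ * ⁅⁅x,y⁆,t⁆ = ⁅⁅x,y⁆,t⁆ * ⁅⁅x,y⁆,z⁆ :=
    (central_swap (Hc x y z) _).symm
  rw [← mul_assoc, hA]
  group

omit Hc in
lemma homfst {A B : P} (c : P) (h1 : ⁅A,c⁆ ∈ Subgroup.center P) (h2 : ⁅B,c⁆ ∈ Subgroup.center P) :
    ⁅A*B,c⁆ = ⁅A,c⁆ * ⁅B,c⁆ := by
  rw [comm_expand_left, central_conj h2 A, ← central_swap h1 ⁅B,c⁆]

omit Hc in
lemma homfst_inv {A : P} (c : P) (h1 : ⁅A,c⁆ ∈ Subgroup.center P)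
    (h2 : ⁅A⁻¹,c⁆ ∈ Subgroup.center P) : ⁅A⁻¹,c⁆ = ⁅A,c⁆⁻¹ := by
  have h := homfst (A := A) (B := A⁻¹) c h1 h2
  simp only [mul_inv_cancel] at h
  rw [commutatorElement_one_left] at h
  exact eq_inv_of_mul_eq_one_right (by rw [← h])

lemma zz_central (g v w : P) : zz g v w ∈ Subgroup.center P := Hc _ _ _

lemma zz_hom (g v₁ v₂ w : P) : zz g (v₁*v₂) w = zz g v₁ w * zz g v₂ w := by
  set s₁ := ⁅g⁻¹, v₁⁻¹⁆ with hs₁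
  set s₂ := ⁅g⁻¹, v₂⁻¹⁆ with hs₂
  have step1 : ⁅g⁻¹, (v₁*v₂)⁻¹⁆ = s₂ * (v₂⁻¹ * s₁ * v₂) := by
    rw [mul_inv_rev, comm_expand, hs₁, hs₂, inv_inv]
  have hB : v₂⁻¹ * s₁ * v₂ = ⁅v₂⁻¹*g⁻¹*v₂, v₂⁻¹*v₁⁻¹*v₂⁆ := by
    simp only [hs₁, commutatorElement_def]; group
  have hBc : ⁅v₂⁻¹ * s₁ * v₂, w⁻¹⁆ ∈ Subgroup.center P := by rw [hB]; exact Hc _ _ _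
  have inner : ⁅s₁, v₂ * w⁻¹ * v₂⁻¹⁆ = ⁅s₁, w⁻¹⁆ := by
    rw [show v₂ * w⁻¹ * v₂⁻¹ = w⁻¹ * ⁅w, v₂⁆ by simp only [commutatorElement_def]; group]
    rw [hs₁, hom2 Hc, hcc Hc]
    group
  have hBval : ⁅v₂⁻¹ * s₁ * v₂, w⁻¹⁆ = ⁅s₁, w⁻¹⁆ := by
    have conjeq : ⁅v₂⁻¹ * s₁ * v₂, w⁻¹⁆ = v₂⁻¹ * ⁅s₁, v₂ * w⁻¹ * v₂⁻¹⁆ * v₂ := by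
      simp only [commutatorElement_def]; group
    rw [conjeq, inner]
    have : v₂⁻¹ * ⁅s₁, w⁻¹⁆ * (v₂⁻¹)⁻¹ = ⁅s₁, w⁻¹⁆ := central_conj (by rw [hs₁]; exact Hc _ _ _) v₂⁻¹
    rw [inv_inv] at this
    exact this
  have main : zz g (v₁*v₂) w = ⁅s₂, w⁻¹⁆ * ⁅s₁, w⁻¹⁆ := by
    rw [zz, step1, homfst _ (by rw [hs₂]; exact Hc _ _ _) hBc, hBval]
  rw [main, zz, zz, ← hs₁, ← hs₂]
  exact (central_swap (by rw [hs₂]; exact Hc _ _ _) _).symm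

section g
variable (g : P) (Cstar : ∀ u z : P, z ∈ Subgroup.center P → u * g * u⁻¹ = g * z → z = 1)
include Cstar

omit Hc in
lemma cg1 (u : P) (h : ⁅g⁻¹,u⁆ ∈ Subgroup.center P) : ⁅g⁻¹,u⁆ = 1 := by
  refine Cstar u _ h ?_
  simp only [commutatorElement_def]; group

omit Hc in
lemma cg2 (u : P) (h : ⁅g,u⁆ ∈ Subgroup.center P) : ⁅g,u⁆ = 1 := by
  have h' : ⁅g,u⁆⁻¹ ∈ Subgroup.center P := (Subgroup.center P).inv_mem h
  have hz : ⁅g,u⁆⁻¹ = 1 := by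
    refine Cstar u _ h' ?_
    rw [central_swap h' g]
    simp only [commutatorElement_def]; group
  rw [← inv_inv ⁅g,u⁆, hz, inv_one]

lemma gcomm2 (x y : P) : ⁅g, ⁅x,y⁆⁆ = 1 :=
  cg2 g Cstar _ ((commutatorElement_inv ⁅x,y⁆ g) ▸ (Subgroup.center P).inv_mem (Hc x y g))

lemma gcomm1 (x y : P) : ⁅g⁻¹, ⁅x,y⁆⁆ = 1 :=
  cg1 g Cstar _ ((commutatorElement_inv ⁅x,y⁆ g⁻¹) ▸ (Subgroup.center P).inv_mem (Hc x y g⁻¹))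

lemma keyA (w : P) (hw : g * w = w * g) (v : P) : ⁅⁅g⁻¹, v⁆, w⁻¹⁆ = 1 := by
  have h1 : Commute g w := hw
  have h2 : Commute g ⁅w⁻¹, v⁻¹⁆ :=
    commutatorElement_eq_one_iff_mul_comm.mp (gcomm2 Hc g Cstar w⁻¹ v⁻¹)
  have h3 : Commute g (v⁻¹ * w * v) := by
    rw [show v⁻¹ * w * v = w * ⁅w⁻¹, v⁻¹⁆ by simp only [commutatorElement_def]; group]
    exact h1.mul_right h2
  have h4 : Commute (v * g * v⁻¹) w := by
    have h3' : g * (v⁻¹ * w * v) = (v⁻¹ * w * v) * g := h3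
    show (v * g * v⁻¹) * w = w * (v * g * v⁻¹)
    calc (v * g * v⁻¹) * w = v * (g * (v⁻¹ * w * v)) * v⁻¹ := by group
    _ = v * ((v⁻¹ * w * v) * g) * v⁻¹ := by rw [h3']
    _ = w * (v * g * v⁻¹) := by group
  have h5 : Commute ⁅g⁻¹, v⁆ w := by
    rw [show ⁅g⁻¹, v⁆ = g⁻¹ * (v * g * v⁻¹) by simp only [commutatorElement_def]; group]
    exact (h1.inv_left).mul_left h4
  exact commutatorElement_eq_one_iff_mul_comm.mpr h5.inv_right

lemma keyB (w : P) (hv : ∀ v : P, ⁅⁅g⁻¹, v⁆, w⁻¹⁆ = 1) : g * w = w * g := by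
  have hcen : ⁅g⁻¹, w⁻¹⁆ ∈ Subgroup.center P := by
    rw [Subgroup.mem_center_iff]
    intro v
    have hw1 : ⁅⁅v, g⁻¹⁆, w⁻¹⁆ = 1 := by
      rw [show ⁅v,g⁻¹⁆ = ⁅g⁻¹,v⁆⁻¹ from (commutatorElement_inv g⁻¹ v).symm]
      rw [homfst_inv _ (Hc _ _ _) (by rw [commutatorElement_inv]; exact Hc _ _ _), hv v]
      exact inv_one
    have st2 : ⁅⁅g⁻¹, v⁆⁻¹, v * (w⁻¹ * v⁻¹)⁆ = 1 := by
      rw [commutatorElement_inv]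
      rw [hom2 Hc, hom2 Hc, hw1, hominv Hc]
      group
    have hcomm : Commute ⁅g⁻¹, v⁆ (v * (w⁻¹ * v⁻¹)) :=
      Commute.inv_left_iff.mp (commutatorElement_eq_one_iff_mul_comm.mp st2)
    have st1' : ⁅g⁻¹, v * (w⁻¹ * v⁻¹)⁆ = ⁅g⁻¹, w⁻¹⁆ := by
      rw [show v * (w⁻¹ * v⁻¹) = w⁻¹ * ⁅w, v⁆ from by simp only [commutatorElement_def]; group]
      rw [comm_expand, gcomm1 Hc g Cstar]
      group
    have hconj : (v * (w⁻¹ * v⁻¹)) * ⁅g⁻¹, v⁆ * (v * (w⁻¹ * v⁻¹))⁻¹ = ⁅g⁻¹, v⁆ := by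
      rw [hcomm.symm.eq]; group
    have E2 : ⁅g⁻¹, v * w⁻¹⁆ = ⁅g⁻¹, w⁻¹⁆ * ⁅g⁻¹, v⁆ := by
      calc ⁅g⁻¹, v * w⁻¹⁆ = ⁅g⁻¹, (v * (w⁻¹ * v⁻¹)) * v⁆ := by
            rw [show (v * (w⁻¹ * v⁻¹)) * v = v * w⁻¹ from by group]
      _ = ⁅g⁻¹, v * (w⁻¹ * v⁻¹)⁆ * ((v * (w⁻¹ * v⁻¹)) * ⁅g⁻¹, v⁆ * (v * (w⁻¹ * v⁻¹))⁻¹) :=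
            comm_expand _ _ _
      _ = ⁅g⁻¹, w⁻¹⁆ * ⁅g⁻¹, v⁆ := by rw [st1', hconj]
    have E1 : ⁅g⁻¹, v * w⁻¹⁆ = ⁅g⁻¹, v⁆ * (v * ⁅g⁻¹, w⁻¹⁆ * v⁻¹) := comm_expand _ _ _
    have h6 : Commute ⁅g⁻¹, v⁆ ⁅g⁻¹, w⁻¹⁆ :=
      commutatorElement_eq_one_iff_mul_comm.mp (hcc Hc _ _ _ _)
    have E3 : ⁅g⁻¹, v⁆ * (v * ⁅g⁻¹, w⁻¹⁆ * v⁻¹) = ⁅g⁻¹, v⁆ * ⁅g⁻¹, w⁻¹⁆ := by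
      rw [← E1, E2, ← h6.symm.eq]
    have E4 : v * ⁅g⁻¹, w⁻¹⁆ * v⁻¹ = ⁅g⁻¹, w⁻¹⁆ := mul_left_cancel E3
    calc v * ⁅g⁻¹, w⁻¹⁆ = (v * ⁅g⁻¹, w⁻¹⁆ * v⁻¹) * v := by group
    _ = ⁅g⁻¹, w⁻¹⁆ * v := by rw [E4]
  have h1 : ⁅g⁻¹, w⁻¹⁆ = 1 := cg1 g Cstar _ hcen
  have hc : Commute g⁻¹ w⁻¹ := commutatorElement_eq_one_iff_mul_comm.mp h1
  have hc2 : Commute g w := by simpa using hc.inv_inv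
  exact hc2.eq

end g
end Hc


open CategoryTheory Module

variable {P : Type} [Group P] [Fintype P]

lemma simple_finrank_pos (V : FDRep ℂ P) [Simple V] : 0 < finrank ℂ V := by
  by_contra h
  push_neg at h
  have h0 : finrank ℂ V = 0 := Nat.le_zero.mp h
  have hsub : Subsingleton V := by
    rw [finrank_zero_iff] at h0
    exact h0
  have : 𝟙 V = 0 := by
    apply Action.Hom.ext
    ext v
    exact @Subsingleton.elim _ hsub _ _
  exact CategoryTheory.id_nonzero V this

lemma schur_comm_smul (V : FDRep ℂ P) [Simple V] (f : V →ₗ[ℂ] V)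
    (hf : ∀ y : P, f * V.ρ y = V.ρ y * f) :
    f = ((LinearMap.trace ℂ V f) / (finrank ℂ V : ℂ)) • (1 : V →ₗ[ℂ] V) := by
  let F : V ⟶ V := ⟨FGModuleCat.ofHom f, fun y => by ext x; exact LinearMap.congr_fun (hf y) x⟩
  obtain ⟨c, hc⟩ := CategoryTheory.endomorphism_simple_eq_smul_id (𝕜 := ℂ) (X := V) F
  have hfc : f = c • (1 : V →ₗ[ℂ] V) := by
    have : (c • 𝟙 V).hom = F.hom := by rw [hc]
    ext x
    have := congrArg (fun φ : V ⟶ V => φ.hom.hom.hom x) hc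
    exact this.symm
  have htr : LinearMap.trace ℂ V f = c * (finrank ℂ V : ℂ) := by
    rw [hfc, map_smul, LinearMap.trace_one, smul_eq_mul]
  rw [htr, hfc]
  congr 1
  have hD : ((finrank ℂ V : ℂ)) ≠ 0 := by
    exact_mod_cast (simple_finrank_pos V).ne'
  field_simp


set_option maxHeartbeats 1000000 in
open Finset in
lemma key_class_eq (V : FDRep ℂ P) [CategoryTheory.Simple V]
    (hfaith : ∀ x : P, V.character x = V.character 1 → x = 1)
    (Hc : ∀ x y z : P, ⁅⁅x,y⁆,z⁆ ∈ Subgroup.center P)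
    (g : P) (hg : V.character g ≠ 0) :
    (Fintype.card P : ℂ) * (V.character g * V.character g⁻¹) =
      (Nat.card {w : P // g * w = w * g} : ℂ) * ((finrank ℂ V : ℂ))^2 := by
  classical
  set D : ℂ := (finrank ℂ V : ℂ) with hD
  have hDne : D ≠ 0 := by
    rw [hD]; exact_mod_cast (simple_finrank_pos V).ne'
  have hcard : ((Fintype.card P : ℂ)) ≠ 0 := Nat.cast_ne_zero.mpr Fintype.card_ne_zero
  have hchar1 : V.character 1 = D := by rw [hD, FDRep.char_one]
  -- Schur for conjugation-averaged operators
  have S1 : ∀ a : P, (∑ x : P, V.ρ (x⁻¹ * a * x)) =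
      (((Fintype.card P : ℂ) * V.character a) / D) • (1 : V →ₗ[ℂ] V) := by
    intro a
    have hcomm : ∀ y : P, (∑ x : P, V.ρ (x⁻¹ * a * x)) * V.ρ y
        = V.ρ y * (∑ x : P, V.ρ (x⁻¹ * a * x)) := by
      intro y
      have h1 : (∑ x : P, V.ρ (x⁻¹ * a * x)) * V.ρ y = ∑ x : P, V.ρ (x⁻¹ * a * x * y) := by
        rw [Finset.sum_mul]
        exact Finset.sum_congr rfl fun x _ => by rw [← map_mul]
      have h2 : V.ρ y * (∑ x : P, V.ρ (x⁻¹ * a * x)) = ∑ x : P, V.ρ (y * (x⁻¹ * a * x)) := by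
        rw [Finset.mul_sum]
        exact Finset.sum_congr rfl fun x _ => by rw [← map_mul]
      rw [h1, h2]
      exact Fintype.sum_equiv (Equiv.mulRight y) _ _ (fun x => by
        congr 1
        simp only [Equiv.coe_mulRight]
        group)
    have := schur_comm_smul V (∑ x : P, V.ρ (x⁻¹ * a * x)) hcomm
    rw [this]
    congr 1
    rw [map_sum]
    have : ∀ x : P, LinearMap.trace ℂ V (V.ρ (x⁻¹ * a * x)) = V.character a := by
      intro x
      have h := FDRep.char_conj V a x⁻¹
      rw [inv_inv] at h
      exact h
    rw [Finset.sum_congr rfl fun x _ => this x, Finset.sum_const, Finset.card_univ]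
    simp [nsmul_eq_mul]
    rfl
  have S2 : ∀ z : P, z ∈ Subgroup.center P → V.ρ z = (V.character z / D) • (1 : V →ₗ[ℂ] V) := by
    intro z hz
    have hcomm : ∀ y : P, V.ρ z * V.ρ y = V.ρ y * V.ρ z := by
      intro y
      rw [← map_mul, ← map_mul]
      exact congrArg V.ρ (central_swap hz y).symm
    exact schur_comm_smul V (V.ρ z) hcomm
  -- character of central products
  have chiz : ∀ z b : P, z ∈ Subgroup.center P →
      V.character (z * b) = (V.character z / D) * V.character b := by
    intro z b hz
    show LinearMap.trace ℂ V (V.ρ (z * b)) = _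
    rw [map_mul, S2 z hz, smul_mul_assoc, one_mul, map_smul, smul_eq_mul]
    rfl
  have lam_one : ∀ z : P, z ∈ Subgroup.center P → V.character z / D = 1 → z = 1 := by
    intro z hz h1
    apply hfaith
    rw [hchar1]
    exact (div_eq_one_iff_eq hDne).mp h1
  -- the faithfulness/support consequence
  have Cstar : ∀ u z : P, z ∈ Subgroup.center P → u * g * u⁻¹ = g * z → z = 1 := by
    intro u z hz he
    have h2 : (V.character z / D) * V.character g = V.character g := by
      rw [← chiz z g hz, show z * g = g * z from (central_swap hz g).symm, ← he]
      exact FDRep.char_conj V g u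
    have h4 : (V.character z / D) * V.character g = 1 * V.character g := by
      rw [one_mul]; exact h2
    exact lam_one z hz (mul_right_cancel₀ hg h4)
  -- the v-sum of central characters
  have charSum : ∀ w : P, (∑ v : P, V.character (zz g v w) / D) =
      (if g * w = w * g then (Fintype.card P : ℂ) else 0) := by
    intro w
    by_cases hw : g * w = w * g
    · rw [if_pos hw]
      have hzz : ∀ v : P, V.character (zz g v w) / D = 1 := by
        intro v
        have h1 : zz g v w = 1 := keyA Hc g Cstar w hw v⁻¹
        rw [h1, hchar1]
        exact div_self hDne
      rw [Finset.sum_congr rfl fun v _ => hzz v, Finset.sum_const, Finset.card_univ]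
      simp [nsmul_eq_mul]
    · rw [if_neg hw]
      have hex : ∃ v₀ : P, V.character (zz g v₀ w) / D ≠ 1 := by
        by_contra hall
        push_neg at hall
        apply hw
        apply keyB Hc g Cstar w
        intro v
        have h1 : zz g v⁻¹ w = 1 := lam_one _ (zz_central Hc g v⁻¹ w) (hall v⁻¹)
        rw [zz, inv_inv] at h1
        exact h1
      obtain ⟨v₀, hv₀⟩ := hex
      have hFmul : ∀ v₁ v₂ : P, V.character (zz g (v₁ * v₂) w) / D
          = (V.character (zz g v₁ w) / D) * (V.character (zz g v₂ w) / D) := by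
        intro v₁ v₂
        rw [zz_hom Hc, chiz _ _ (zz_central Hc g v₁ w)]
        field_simp
      have hshift : (∑ v : P, V.character (zz g v w) / D)
          = (V.character (zz g v₀ w) / D) * (∑ v : P, V.character (zz g v w) / D) := by
        rw [Finset.mul_sum]
        refine (Fintype.sum_equiv (Equiv.mulLeft v₀) _ _ (fun v => ?_)).symm
        simp only [Equiv.coe_mulLeft]
        exact (hFmul v₀ v).symm
      have : ((V.character (zz g v₀ w) / D) - 1) * (∑ v : P, V.character (zz g v w) / D) = 0 := by
        rw [sub_mul, one_mul, ← hshift, sub_self]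
      rcases mul_eq_zero.mp this with h | h
      · exact absurd (by linear_combination h) hv₀
      · exact h
  -- the operator computation
  set c1 : ℂ := ((Fintype.card P : ℂ) * V.character g) / D with hc1
  set c2 : ℂ := ((Fintype.card P : ℂ) * V.character g⁻¹) / D with hc2
  have hA : (∑ v : P, V.ρ ((mm g v)⁻¹)) = c1 • V.ρ g⁻¹ := by
    have e1 : ∀ v : P, V.ρ ((mm g v)⁻¹) = V.ρ (v⁻¹ * g * v) * V.ρ g⁻¹ := by
      intro v
      rw [← map_mul]
      refine congrArg V.ρ ?_
      show (mm g v)⁻¹ = v⁻¹ * g * v * g⁻¹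
      simp only [mm]; group
    rw [Finset.sum_congr rfl fun v _ => e1 v, ← Finset.sum_mul, S1 g, smul_mul_assoc, one_mul, hc1]
  have hB : (∑ u : P, V.ρ (mm g u)) = c2 • V.ρ g := by
    have e2 : ∀ u : P, V.ρ (mm g u) = V.ρ g * V.ρ (u⁻¹ * g⁻¹ * u) := by
      intro u
      rw [← map_mul]
      refine congrArg V.ρ ?_
      show mm g u = g * (u⁻¹ * g⁻¹ * u)
      simp only [mm]; group
    rw [Finset.sum_congr rfl fun u _ => e2 u, ← Finset.mul_sum, S1 g⁻¹, mul_smul_comm, mul_one, hc2]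
  have hAB : (∑ v : P, V.ρ ((mm g v)⁻¹)) * (∑ u : P, V.ρ (mm g u))
      = (c1 * c2) • (1 : V →ₗ[ℂ] V) := by
    rw [hA, hB, smul_mul_assoc, mul_smul_comm, smul_smul, ← map_mul, inv_mul_cancel, map_one]
  have htr1 : LinearMap.trace ℂ V ((∑ v : P, V.ρ ((mm g v)⁻¹)) * (∑ u : P, V.ρ (mm g u)))
      = c1 * c2 * D := by
    rw [hAB, map_smul, LinearMap.trace_one, smul_eq_mul, hD]
  have expand : (∑ v : P, V.ρ ((mm g v)⁻¹)) * (∑ u : P, V.ρ (mm g u))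
      = ∑ v : P, ∑ u : P, V.ρ ((mm g v)⁻¹ * mm g u) := by
    rw [Finset.sum_mul_sum]
    exact Finset.sum_congr rfl fun v _ => Finset.sum_congr rfl fun u _ => by rw [← map_mul]
  have htr2 : LinearMap.trace ℂ V (∑ v : P, ∑ u : P, V.ρ ((mm g v)⁻¹ * mm g u))
      = ∑ v : P, ∑ u : P, V.character ((mm g v)⁻¹ * mm g u) := by
    rw [map_sum]
    exact Finset.sum_congr rfl fun v _ => by rw [map_sum]; rfl
  have term : ∀ v w : P, V.character ((mm g v)⁻¹ * mm g (v * w))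
      = (V.character (zz g v w) / D) * V.character (mm g w) := by
    intro v w
    rw [mi_identity, central_conj (zz_central Hc g v w) g, chiz _ _ (zz_central Hc g v w)]
  have reindex : ∀ v : P, (∑ u : P, V.character ((mm g v)⁻¹ * mm g u))
      = ∑ w : P, V.character ((mm g v)⁻¹ * mm g (v * w)) :=
    fun v => (Fintype.sum_equiv (Equiv.mulLeft v)
      (fun w => V.character ((mm g v)⁻¹ * mm g (v * w)))
      (fun u => V.character ((mm g v)⁻¹ * mm g u)) (fun w => rfl)).symm
  set N : ℂ := ((Finset.univ.filter fun w : P => g * w = w * g).card : ℂ) with hN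
  have main : c1 * c2 * D = N * ((Fintype.card P : ℂ) * D) := by
    calc c1 * c2 * D
        = ∑ v : P, ∑ u : P, V.character ((mm g v)⁻¹ * mm g u) := by rw [← htr2, ← expand, htr1]
      _ = ∑ v : P, ∑ w : P, (V.character (zz g v w) / D) * V.character (mm g w) := by
          refine Finset.sum_congr rfl fun v _ => ?_
          rw [reindex v]
          exact Finset.sum_congr rfl fun w _ => term v w
      _ = ∑ w : P, (∑ v : P, V.character (zz g v w) / D) * V.character (mm g w) := by
          rw [Finset.sum_comm]
          exact Finset.sum_congr rfl fun w _ => by rw [Finset.sum_mul]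
      _ = ∑ w : P, (if g * w = w * g then (Fintype.card P : ℂ) else 0) * V.character (mm g w) := by
          exact Finset.sum_congr rfl fun w _ => by rw [charSum w]
      _ = ∑ w ∈ Finset.univ.filter (fun w : P => g * w = w * g),
            (Fintype.card P : ℂ) * V.character (mm g w) := by
          rw [Finset.sum_filter]
          exact Finset.sum_congr rfl fun w _ => by
            by_cases h : g * w = w * g <;> simp [h]
      _ = ∑ w ∈ Finset.univ.filter (fun w : P => g * w = w * g), (Fintype.card P : ℂ) * D := by
          refine Finset.sum_congr rfl fun w hw => ?_
          rw [mm_one_of_comm (Finset.mem_filter.mp hw).2, hchar1]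
      _ = N * ((Fintype.card P : ℂ) * D) := by
          rw [Finset.sum_const, hN, nsmul_eq_mul]
  have hNN : N = (Nat.card {w : P // g * w = w * g} : ℂ) := by
    rw [hN]
    congr 1
    rw [Nat.card_eq_fintype_card, Fintype.card_subtype]
  have key0 : ((Fintype.card P : ℂ) * V.character g) * ((Fintype.card P : ℂ) * V.character g⁻¹)
      = N * ((Fintype.card P : ℂ) * D) * D := by
    calc ((Fintype.card P : ℂ) * V.character g) * ((Fintype.card P : ℂ) * V.character g⁻¹)
        = (c1 * D) * (c2 * D) := by rw [hc1, hc2, div_mul_cancel₀ _ hDne, div_mul_cancel₀ _ hDne]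
      _ = (c1 * c2 * D) * D := by ring
      _ = N * ((Fintype.card P : ℂ) * D) * D := by rw [main]
  have key1 : (Fintype.card P : ℂ) * ((Fintype.card P : ℂ) * (V.character g * V.character g⁻¹))
      = (Fintype.card P : ℂ) * ((Nat.card {w : P // g * w = w * g} : ℂ) * D^2) := by
    rw [← hNN]
    linear_combination key0
  exact mul_left_cancel₀ hcard key1

open Finset in
lemma class_mul_centralizer_eq (r : P) :
    Nat.card {u : P // ConjClasses.mk u = ConjClasses.mk r}
      * Nat.card {w : P // r * w = w * r} = Fintype.card P := by
  classical
  have h1 := MulAction.card_orbit_mul_card_stabilizer_eq_card_group (ConjAct P) r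
  have e1 : Fintype.card (MulAction.orbit (ConjAct P) r)
      = Nat.card {u : P // ConjClasses.mk u = ConjClasses.mk r} := by
    rw [Nat.card_eq_fintype_card]
    apply Fintype.card_congr
    apply Equiv.subtypeEquivRight
    intro x
    rw [ConjAct.mem_orbit_conjAct, ConjClasses.mk_eq_mk_iff_isConj]
  have e2 : Fintype.card (MulAction.stabilizer (ConjAct P) r)
      = Nat.card {w : P // r * w = w * r} := by
    rw [Nat.card_eq_fintype_card]
    apply Fintype.card_congr
    refine (Equiv.subtypeEquiv (ConjAct.toConjAct (G := P)).toEquiv ?_).symm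
    intro w
    simp only [MulEquiv.toEquiv_eq_coe, EquivLike.coe_coe]
    rw [MulAction.mem_stabilizer_iff, ConjAct.toConjAct_smul]
    constructor
    · intro h
      rw [← h]; group
    · intro h
      have h2 := congrArg (fun t => t * w) h
      simp only [inv_mul_cancel_right] at h2
      exact h2.symm
  rw [e1, e2, ConjAct.card] at h1
  exact h1

end Stmt13Helper

open scoped BigOperators

set_option maxHeartbeats 1000000 in
theorem stmt13 {p : ℕ} (hp : p.Prime) {P : Type} [Group P] [Fintype P]
    (hP : IsPGroup p P) (hclass : (⊤ : Subgroup P).lowerCentralSeries 3 = ⊥)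
    (χ : P → ℂ) (hχ : IsIrreducibleCharacter P χ)
    (hfaith : ∀ g : P, χ g = χ 1 → g = 1) (d : ℕ) (hd : χ 1 = d) :
    Nat.card {c : ConjClasses P // ∃ g : P, ConjClasses.mk g = c ∧ χ g ≠ 0} * d ^ 2
      = Nat.card P := by
  classical
  open Stmt13Helper CategoryTheory Module in
  obtain ⟨V, hS, hVχ⟩ := hχ
  haveI := hS
  have hχeq : χ = V.character := (funext hVχ).symm
  subst hχeq
  -- dimension
  have hdfin : (finrank ℂ V : ℕ) = d := by
    have h := hd
    rw [FDRep.char_one] at h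
    exact_mod_cast h
  set D : ℂ := (finrank ℂ V : ℂ) with hDdef
  have hDd : D = (d : ℂ) := by rw [hDdef, hdfin]
  have hDne : D ≠ 0 := by
    rw [hDdef]
    exact_mod_cast (simple_finrank_pos V).ne'
  have hcard : ((Fintype.card P : ℂ)) ≠ 0 := Nat.cast_ne_zero.mpr Fintype.card_ne_zero
  -- class-3 hypothesis
  have Hc : ∀ x y z : P, ⁅⁅x,y⁆,z⁆ ∈ Subgroup.center P := by
    intro x y z
    have m1 : ⁅x, y⁆ ∈ (⊤ : Subgroup P).lowerCentralSeries 1 := by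
      rw [show (1:ℕ) = 0 + 1 from rfl, Subgroup.lowerCentralSeries_succ]
      exact Subgroup.commutator_mem_commutator
        (by rw [Subgroup.lowerCentralSeries_zero]; exact Subgroup.mem_top x) (Subgroup.mem_top y)
    have m2 : ⁅⁅x,y⁆, z⁆ ∈ (⊤ : Subgroup P).lowerCentralSeries 2 := by
      rw [show (2:ℕ) = 1 + 1 from rfl, Subgroup.lowerCentralSeries_succ]
      exact Subgroup.commutator_mem_commutator m1 (Subgroup.mem_top z)
    rw [Subgroup.mem_center_iff]
    intro b
    have m3 : ⁅⁅⁅x,y⁆,z⁆, b⁆ ∈ (⊤ : Subgroup P).lowerCentralSeries 3 := by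
      rw [show (3:ℕ) = 2 + 1 from rfl, Subgroup.lowerCentralSeries_succ]
      exact Subgroup.commutator_mem_commutator m2 (Subgroup.mem_top b)
    rw [hclass, Subgroup.mem_bot] at m3
    exact (commutatorElement_eq_one_iff_mul_comm.mp m3).symm
  -- orthogonality
  have hcardN : ((Nat.card P : ℂ)) ≠ 0 := by exact_mod_cast Nat.card_pos.ne'
  haveI : Invertible ((Nat.card P : ℂ)) := invertibleOfNonzero hcardN
  have horth := FDRep.char_orthonormal (k := ℂ) (G := P) V V
  rw [if_pos ⟨Iso.refl V⟩] at horth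
  have hsum : (∑ u : P, V.character u * V.character u⁻¹) = (Fintype.card P : ℂ) := by
    have h2 := congrArg (fun t : ℂ => (Nat.card P : ℂ) * t) horth
    simp only [← mul_assoc, mul_inv_cancel₀ hcardN, one_mul, Nat.cast_one, mul_one] at h2
    rw [Nat.card_eq_fintype_card] at h2
    exact h2
  -- partition into conjugacy classes
  haveI : Fintype (ConjClasses P) := Fintype.ofFinite _
  have hpart : (∑ c : ConjClasses P, ∑ u ∈ Finset.univ.filter
        (fun u : P => ConjClasses.mk u = c), V.character u * V.character u⁻¹)
      = ∑ u : P, V.character u * V.character u⁻¹ :=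
    Finset.sum_fiberwise_of_maps_to (fun u _ => Finset.mem_univ _) _
  -- evaluate each class
  have hout : ∀ c : ConjClasses P, ConjClasses.mk (Quotient.out c) = c := by
    intro c
    rw [← ConjClasses.quotient_mk_eq_mk]
    exact Quotient.out_eq c
  have class_eval : ∀ c : ConjClasses P,
      (∑ u ∈ Finset.univ.filter (fun u : P => ConjClasses.mk u = c),
        V.character u * V.character u⁻¹)
      = if V.character (Quotient.out c) = 0 then 0 else D^2 := by
    intro c
    set r : P := Quotient.out c with hr
    have hconst : ∀ u ∈ Finset.univ.filter (fun u : P => ConjClasses.mk u = c),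
        V.character u * V.character u⁻¹ = V.character r * V.character r⁻¹ := by
      intro u hu
      have hmk : ConjClasses.mk u = ConjClasses.mk r := by
        rw [hout c, (Finset.mem_filter.mp hu).2]
      obtain ⟨h, hh⟩ := isConj_iff.mp (ConjClasses.mk_eq_mk_iff_isConj.mp hmk.symm)
      have h1 : V.character u = V.character r := by rw [← hh]; exact FDRep.char_conj V r h
      have h2 : V.character u⁻¹ = V.character r⁻¹ := by
        rw [← hh, show (h * r * h⁻¹)⁻¹ = h * r⁻¹ * h⁻¹ from by group]
        exact FDRep.char_conj V r⁻¹ h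
      rw [h1, h2]
    rw [Finset.sum_congr rfl hconst, Finset.sum_const]
    by_cases hzero : V.character r = 0
    · rw [if_pos hzero, hzero, zero_mul, smul_zero]
    · rw [if_neg hzero]
      have hfilter : (Finset.univ.filter (fun u : P => ConjClasses.mk u = c))
          = (Finset.univ.filter (fun u : P => ConjClasses.mk u = ConjClasses.mk r)) := by
        apply Finset.filter_congr
        intro u _
        rw [hout c]
      rw [hfilter, nsmul_eq_mul]
      have hfc : (Finset.univ.filter (fun u : P => ConjClasses.mk u = ConjClasses.mk r)).card
          = Nat.card {u : P // ConjClasses.mk u = ConjClasses.mk r} := by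
        rw [Nat.card_eq_fintype_card, Fintype.card_subtype]
      rw [hfc]
      -- use the key lemma and orbit-stabilizer
      have hkey := key_class_eq V hfaith Hc r hzero
      have hos := class_mul_centralizer_eq r
      apply mul_left_cancel₀ hcard
      calc (Fintype.card P : ℂ) * ((Nat.card {u : P // ConjClasses.mk u = ConjClasses.mk r} : ℂ)
            * (V.character r * V.character r⁻¹))
          = (Nat.card {u : P // ConjClasses.mk u = ConjClasses.mk r} : ℂ)
            * ((Fintype.card P : ℂ) * (V.character r * V.character r⁻¹)) := by ring
        _ = (Nat.card {u : P // ConjClasses.mk u = ConjClasses.mk r} : ℂ)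
            * ((Nat.card {w : P // r * w = w * r} : ℂ) * D^2) := by rw [hkey]
        _ = ((Nat.card {u : P // ConjClasses.mk u = ConjClasses.mk r}
            * Nat.card {w : P // r * w = w * r} : ℕ) : ℂ) * D^2 := by push_cast; ring
        _ = (Fintype.card P : ℂ) * D^2 := by rw [hos]
  -- collect
  have hcount : (Fintype.card P : ℂ)
      = ((Finset.univ.filter (fun c : ConjClasses P => ¬ V.character (Quotient.out c) = 0)).card : ℂ)
        * D^2 := by
    rw [← hsum, ← hpart, Finset.sum_congr rfl (fun c _ => class_eval c), Finset.sum_ite,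
      Finset.sum_const, Finset.sum_const, smul_zero, zero_add, nsmul_eq_mul]
  -- identify the subtype count
  have hpred : ∀ c : ConjClasses P,
      (∃ g : P, ConjClasses.mk g = c ∧ V.character g ≠ 0)
        ↔ ¬ V.character (Quotient.out c) = 0 := by
    intro c
    constructor
    · rintro ⟨g, hgc, hgne⟩
      have hmk : ConjClasses.mk g = ConjClasses.mk (Quotient.out c) := by rw [hout c, hgc]
      obtain ⟨h, hh⟩ := isConj_iff.mp (ConjClasses.mk_eq_mk_iff_isConj.mp hmk)
      rw [← hh]
      rw [FDRep.char_conj V g h]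
      exact hgne
    · intro h
      exact ⟨Quotient.out c, hout c, h⟩
  have hsubcard : Nat.card {c : ConjClasses P // ∃ g : P, ConjClasses.mk g = c ∧ V.character g ≠ 0}
      = (Finset.univ.filter (fun c : ConjClasses P => ¬ V.character (Quotient.out c) = 0)).card := by
    rw [Nat.card_eq_fintype_card, Fintype.card_subtype]
    congr 1
    apply Finset.filter_congr
    intro c _
    exact hpred c
  -- finish
  rw [Nat.card_eq_fintype_card (α := P)]
  have : ((Nat.card {c : ConjClasses P // ∃ g : P, ConjClasses.mk g = c ∧ V.character g ≠ 0}
      * d ^ 2 : ℕ) : ℂ) = ((Fintype.card P : ℕ) : ℂ) := by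
    push_cast
    rw [hsubcard, hcount, hDd]
    try push_cast
    try ring
  exact_mod_cast this
end

section
/- Let p be an odd prime, P a p-group of nilpotence class at most 3, and χ an irreducible character of P. If x ∈ P with χ(x) ≠ 0, then χ(x^m) ≠ 0 for every integer m. -/
open scoped BigOperators

namespace Stmt14Aux

open scoped commutatorElement

variable {P : Type} [Group P]

/-- `ψ_m(h) = x^{-m} h x^m h⁻¹`. -/
def psiF (x : P) (m : ℕ) (h : P) : P := (x ^ m)⁻¹ * h * x ^ m * h⁻¹

/-- `co(w,k) = w⁻¹ k w k⁻¹`. -/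
def coF (w k : P) : P := w⁻¹ * k * w * k⁻¹

/-- auxiliary commutator in the "wc" convention -/
def wcF (x y : P) : P := x⁻¹ * y⁻¹ * x * y

lemma wcF_eq_comm (x y : P) : wcF x y = ⁅x⁻¹, y⁻¹⁆ := by
  simp only [commutatorElement_def, inv_inv, wcF]

lemma wcF_one_iff (x y : P) : wcF x y = 1 ↔ Commute x y := by
  rw [wcF_eq_comm, commutatorElement_eq_one_iff_commute]
  constructor
  · intro h; simpa using h.inv_inv
  · intro h; exact h.inv_inv

lemma psiF_mem (x : P) (m : ℕ) (h : P) : psiF x m h ∈ Subgroup.lowerCentralSeries (⊤ : Subgroup P) 1 := by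
  have e : psiF x m h = ⁅(x ^ m)⁻¹, h⁆ := by
    simp only [commutatorElement_def, inv_inv, psiF]
  rw [e, Subgroup.top_lowerCentralSeries_one, commutator_def]
  exact Subgroup.commutator_mem_commutator (Subgroup.mem_top _) (Subgroup.mem_top _)

lemma lcs2_eq : Subgroup.lowerCentralSeries (⊤ : Subgroup P) 2 = ⁅Subgroup.lowerCentralSeries (⊤ : Subgroup P) 1, (⊤ : Subgroup P)⁆ :=
  Subgroup.lowerCentralSeries_succ _ 1

lemma lcs3_eq : Subgroup.lowerCentralSeries (⊤ : Subgroup P) 3 = ⁅Subgroup.lowerCentralSeries (⊤ : Subgroup P) 2, (⊤ : Subgroup P)⁆ :=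
  Subgroup.lowerCentralSeries_succ _ 2

lemma coF_mem {w : P} (hw : w ∈ Subgroup.lowerCentralSeries (⊤ : Subgroup P) 1) (k : P) :
    coF w k ∈ Subgroup.lowerCentralSeries (⊤ : Subgroup P) 2 := by
  have e : coF w k = ⁅w⁻¹, k⁆ := by simp only [commutatorElement_def, inv_inv, coF]
  rw [e, lcs2_eq]
  exact Subgroup.commutator_mem_commutator (Subgroup.inv_mem _ hw) (Subgroup.mem_top _)

lemma lcs2_le_lcs1 : Subgroup.lowerCentralSeries (⊤ : Subgroup P) 2 ≤ Subgroup.lowerCentralSeries (⊤ : Subgroup P) 1 :=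
  Subgroup.lowerCentralSeries_antitone _ (by norm_num)

section central
variable (hcl : Subgroup.lowerCentralSeries (⊤ : Subgroup P) 3 = ⊥)
include hcl

lemma central2 {z : P} (hz : z ∈ Subgroup.lowerCentralSeries (⊤ : Subgroup P) 2) (g : P) : Commute z g := by
  have h3 : ⁅z, g⁆ ∈ Subgroup.lowerCentralSeries (⊤ : Subgroup P) 3 := by
    rw [lcs3_eq]
    exact Subgroup.commutator_mem_commutator hz (Subgroup.mem_top _)
  rw [hcl, Subgroup.mem_bot] at h3
  exact commutatorElement_eq_one_iff_commute.mp h3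

lemma gamma_abelian {u v : P} (hu : u ∈ Subgroup.lowerCentralSeries (⊤ : Subgroup P) 1)
    (hv : v ∈ Subgroup.lowerCentralSeries (⊤ : Subgroup P) 1) : Commute u v := by
  have key : ∀ a b : P, Commute ⁅a, b⁆ v := by
    intro a b
    have hw : (b⁻¹ * (wcF (wcF a⁻¹ b⁻¹) v) * b) * (v⁻¹ * (wcF (wcF b v⁻¹) a⁻¹) * v)
        * (a * (wcF (wcF v a) b) * a⁻¹) = 1 := by unfold wcF; group
    have m2 : wcF b v⁻¹ ∈ Subgroup.lowerCentralSeries (⊤ : Subgroup P) 2 := by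
      have e : wcF b v⁻¹ = ⁅v, b⁻¹⁆⁻¹ := by
        rw [← commutatorElement_inv]; simp only [commutatorElement_def, inv_inv, wcF]
      rw [e, lcs2_eq]
      exact Subgroup.inv_mem _
        (Subgroup.commutator_mem_commutator hv (Subgroup.mem_top _))
    have m3 : wcF v a ∈ Subgroup.lowerCentralSeries (⊤ : Subgroup P) 2 := by
      have e : wcF v a = ⁅v⁻¹, a⁻¹⁆ := wcF_eq_comm v a
      rw [e, lcs2_eq]
      exact Subgroup.commutator_mem_commutator (Subgroup.inv_mem _ hv) (Subgroup.mem_top _)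
    have hT2 : wcF (wcF b v⁻¹) a⁻¹ = 1 :=
      (wcF_one_iff _ _).mpr (central2 hcl m2 a⁻¹)
    have hT3 : wcF (wcF v a) b = 1 :=
      (wcF_one_iff _ _).mpr (central2 hcl m3 b)
    rw [hT2, hT3] at hw
    have hX : wcF (wcF a⁻¹ b⁻¹) v = 1 := by
      have e : wcF (wcF a⁻¹ b⁻¹) v
          = b * ((b⁻¹ * (wcF (wcF a⁻¹ b⁻¹) v) * b) * (v⁻¹ * 1 * v) * (a * 1 * a⁻¹)) * b⁻¹ := by
        group
      rw [e, hw]; group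
    have e2 : wcF a⁻¹ b⁻¹ = ⁅a, b⁆ := by
      simp only [commutatorElement_def, inv_inv, wcF]
    rw [e2] at hX
    exact (wcF_one_iff _ _).mp hX
  have hle : Subgroup.lowerCentralSeries (⊤ : Subgroup P) 1 ≤ Subgroup.centralizer {v} := by
    rw [Subgroup.top_lowerCentralSeries_one, commutator_def, Subgroup.commutator_le]
    intro g1 _ g2 _
    rw [Subgroup.mem_centralizer_iff]
    intro h hh
    rw [Set.mem_singleton_iff] at hh
    subst hh
    exact (key g1 g2).symm.eq
  have := hle hu
  rw [Subgroup.mem_centralizer_iff] at this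
  exact (this v (Set.mem_singleton v)).symm

end central

section identities
variable (hc : ∀ z ∈ Subgroup.lowerCentralSeries (⊤ : Subgroup P) 2, ∀ g : P, Commute z g)

lemma coF_central {z : P} (hz : ∀ g : P, Commute z g) (k : P) : coF z k = 1 := by
  have e : coF z k = z⁻¹ * (k * z) * k⁻¹ := by unfold coF; group
  rw [e, ← (hz k).eq]
  group

include hc

lemma coF_mul_left {w₁ : P} (hw₁ : w₁ ∈ Subgroup.lowerCentralSeries (⊤ : Subgroup P) 1) (w₂ k : P) :
    coF (w₁ * w₂) k = coF w₁ k * coF w₂ k := by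
  have hcc := hc _ (coF_mem hw₁ k)
  calc coF (w₁ * w₂) k = w₂⁻¹ * coF w₁ k * (k * w₂ * k⁻¹) := by unfold coF; group
    _ = coF w₁ k * w₂⁻¹ * (k * w₂ * k⁻¹) := by rw [(hcc w₂⁻¹).symm.eq]
    _ = coF w₁ k * coF w₂ k := by unfold coF; group

lemma coF_mul_right {w : P} (hw : w ∈ Subgroup.lowerCentralSeries (⊤ : Subgroup P) 1) (k₁ k₂ : P) :
    coF w (k₁ * k₂) = coF w k₁ * coF w k₂ := by
  have hcc := hc _ (coF_mem hw k₂)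
  calc coF w (k₁ * k₂) = coF w k₁ * (k₁ * coF w k₂ * k₁⁻¹) := by unfold coF; group
    _ = coF w k₁ * (coF w k₂ * k₁ * k₁⁻¹) := by rw [(hcc k₁).symm.eq]
    _ = coF w k₁ * coF w k₂ := by group

lemma coF_pow_left {w : P} (hw : w ∈ Subgroup.lowerCentralSeries (⊤ : Subgroup P) 1) (k : P) (n : ℕ) :
    coF (w ^ n) k = (coF w k) ^ n := by
  induction n with
  | zero => simp [coF]
  | succ n ih =>
      rw [pow_succ, coF_mul_left hc (Subgroup.pow_mem _ hw n) w k, ih, pow_succ]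

lemma coF_pow_right {w : P} (hw : w ∈ Subgroup.lowerCentralSeries (⊤ : Subgroup P) 1) (k : P) (n : ℕ) :
    coF w (k ^ n) = (coF w k) ^ n := by
  induction n with
  | zero => simp [coF]
  | succ n ih =>
      rw [pow_succ, coF_mul_right hc hw (k ^ n) k, ih, pow_succ]

omit hc in
lemma psiF_mul (x : P) (m : ℕ) (h k : P) :
    psiF x m (h * k) = psiF x m h * psiF x m k * coF (psiF x m k) h := by
  unfold psiF coF; group

omit hc in
lemma psiF_succ (x : P) (m : ℕ) (h : P) :
    psiF x (m + 1) h = psiF x m h * coF (psiF x m h) x⁻¹ * psiF x 1 h := by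
  unfold psiF coF; group

lemma psiF_pow_formula (x : P) (m : ℕ) (h : P) :
    psiF x m h = (psiF x 1 h) ^ m * (coF (psiF x 1 h) x⁻¹) ^ (m.choose 2) := by
  set A := psiF x 1 h with hA
  set D := coF (psiF x 1 h) x⁻¹ with hD
  have hAmem : A ∈ Subgroup.lowerCentralSeries (⊤ : Subgroup P) 1 := psiF_mem x 1 h
  have hDc : ∀ g : P, Commute D g := hc _ (coF_mem hAmem x⁻¹)
  have hDcp : ∀ (j : ℕ) (g : P), Commute (D ^ j) g := fun j g => (hDc g).pow_left j
  induction m with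
  | zero => simp [psiF]
  | succ m ih =>
      rw [psiF_succ, ih]
      have h1 : coF (A ^ m * D ^ m.choose 2) x⁻¹ = D ^ m := by
        rw [coF_mul_left hc (Subgroup.pow_mem _ hAmem m) _ _,
          coF_pow_left hc hAmem, ← hD, coF_central (hDcp (m.choose 2)), mul_one]
      rw [h1]
      calc A ^ m * D ^ m.choose 2 * D ^ m * A
          = A ^ m * (D ^ m.choose 2 * D ^ m) * A := by group
        _ = A ^ m * (D ^ (m.choose 2 + m)) * A := by rw [pow_add]
        _ = A ^ m * A * D ^ (m.choose 2 + m) := by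
              rw [mul_assoc, (hDcp (m.choose 2 + m) A).eq, ← mul_assoc]
        _ = A ^ (m + 1) * D ^ ((m+1).choose 2) := by
              rw [← pow_succ]
              congr 1
              rw [Nat.choose_succ_succ, Nat.choose_one_right, Nat.add_comm]

lemma psiF_base_pow (x u : P) (n : ℕ) :
    psiF x 1 (u ^ n) = (psiF x 1 u) ^ n * (coF (psiF x 1 u) u) ^ (n.choose 2) := by
  set A := psiF x 1 u with hA
  set E := coF (psiF x 1 u) u with hE
  have hAmem : A ∈ Subgroup.lowerCentralSeries (⊤ : Subgroup P) 1 := psiF_mem x 1 u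
  have hEc : ∀ g : P, Commute E g := hc _ (coF_mem hAmem u)
  have hEcp : ∀ (j : ℕ) (g : P), Commute (E ^ j) g := fun j g => (hEc g).pow_left j
  induction n with
  | zero => simp [psiF]
  | succ n ih =>
      have step : psiF x 1 (u ^ (n+1)) = psiF x 1 (u ^ n) * A * coF A (u ^ n) := by
        rw [pow_succ, psiF_mul x 1 (u ^ n) u, ← hA]
      rw [step, ih, coF_pow_right hc hAmem, ← hE]
      calc A ^ n * E ^ n.choose 2 * A * E ^ n
          = A ^ n * (E ^ n.choose 2 * A) * E ^ n := by group
        _ = A ^ n * (A * E ^ n.choose 2) * E ^ n := by rw [(hEcp (n.choose 2) A).eq]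
        _ = A ^ (n + 1) * (E ^ n.choose 2 * E ^ n) := by
              rw [← mul_assoc, ← mul_assoc, ← pow_succ, mul_assoc]
        _ = A ^ (n + 1) * E ^ ((n+1).choose 2) := by
              rw [← pow_add]
              congr 1
              rw [Nat.choose_succ_succ, Nat.choose_one_right, Nat.add_comm]

lemma coF_psiF_pow (x : P) (m : ℕ) (u k : P) :
    coF (psiF x m u) k = (coF (psiF x 1 u) k) ^ m := by
  have hm := psiF_mem x 1 u
  rw [psiF_pow_formula hc x m u,
    coF_mul_left hc (Subgroup.pow_mem _ hm m),
    coF_pow_left hc hm,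
    coF_central (fun g => ((hc _ (coF_mem hm x⁻¹)) g).pow_left _), mul_one]

lemma coF_psiF_base_pow (x u k : P) (n : ℕ) :
    coF (psiF x 1 (u ^ n)) k = (coF (psiF x 1 u) k) ^ n := by
  have hm := psiF_mem x 1 u
  rw [psiF_base_pow hc x u n,
    coF_mul_left hc (Subgroup.pow_mem _ hm n),
    coF_pow_left hc hm,
    coF_central (fun g => ((hc _ (coF_mem hm u)) g).pow_left _), mul_one]

omit hc in
lemma psiF_one (x : P) (j : ℕ) : psiF x j 1 = 1 := by simp [psiF]

omit hc in
lemma coF_one_left (k : P) : coF 1 k = 1 := by simp [coF]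

lemma coF_psiF_mul (x : P) (j : ℕ) (u₁ u₂ k : P) :
    coF (psiF x j (u₁ * u₂)) k = coF (psiF x j u₁) k * coF (psiF x j u₂) k := by
  rw [psiF_mul x j u₁ u₂,
    coF_mul_left hc (mul_mem (psiF_mem x j u₁) (psiF_mem x j u₂)),
    coF_mul_left hc (psiF_mem x j u₁),
    coF_central (fun g => hc _ (coF_mem (psiF_mem x j u₂) u₁) g), mul_one]

end identities

end Stmt14Aux

namespace Stmt14Aux

lemma conj_root (z : ℂ) (n : ℕ) (hn : n ≠ 0) (h : z ^ n = 1) : (starRingEnd ℂ) z = z⁻¹ := by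
  have h1 : ‖z‖ ^ n = 1 := by rw [← norm_pow, h, norm_one]
  have habs : ‖z‖ = 1 := by
    rcases (pow_eq_one_iff_cases.mp h1) with h2 | h2 | h2
    · omega
    · exact h2
    · exfalso; have := norm_nonneg z; linarith [h2.1]
  exact (Complex.inv_eq_conj habs).symm

lemma root_ne_zero (z : ℂ) (n : ℕ) (hn : n ≠ 0) (h : z ^ n = 1) : z ≠ 0 := by
  intro h0; rw [h0, zero_pow hn] at h; exact zero_ne_one h

lemma pow_eq_one_of_dvd {z : ℂ} {a b : ℕ} (h : z ^ a = 1) (hd : a ∣ b) : z ^ b = 1 := by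
  obtain ⟨c, rfl⟩ := hd; rw [pow_mul, h, one_pow]

lemma sum_hom_eq_zero {P : Type} [Group P] [Fintype P] (β : P → ℂ)
    (hβ : ∀ a b : P, β (a * b) = β a * β b) (k₀ : P) (hk₀ : β k₀ ≠ 1) :
    ∑ k : P, β k = 0 := by
  have h1 : β k₀ * ∑ k : P, β k = ∑ k : P, β k := by
    rw [Finset.mul_sum, ← Equiv.sum_comp (Equiv.mulLeft k₀) (fun k => β k)]
    exact Finset.sum_congr rfl (fun k _ => by rw [Equiv.coe_mulLeft, ← hβ])
  have h2 : (β k₀ - 1) * ∑ k : P, β k = 0 := by linear_combination h1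
  rcases mul_eq_zero.mp h2 with h | h
  · exact absurd (by linear_combination h) hk₀
  · exact h

lemma prime_pow_dvd_choose_two {p t m : ℕ} (hodd : Odd p) (hdvd : p ^ t ∣ m) :
    p ^ t ∣ m.choose 2 := by
  have h2 : 2 * m.choose 2 = m * (m - 1) := by
    rw [Nat.choose_two_right, Nat.mul_div_cancel']
    rcases Nat.even_or_odd m with he | ho
    · exact Dvd.dvd.mul_right he.two_dvd _
    · rcases m with _ | m
      · simp
      · simpa using (Nat.Odd.sub_odd ho odd_one).two_dvd.mul_left _
  have h3 : p ^ t ∣ 2 * m.choose 2 := h2 ▸ hdvd.mul_right _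
  have hcop : Nat.Coprime (p ^ t) 2 :=
    Nat.Coprime.pow_left _ (Nat.coprime_two_right.mpr hodd)
  exact Nat.Coprime.dvd_of_dvd_mul_left hcop h3

lemma root_pow_padic {p : ℕ} (hp : p.Prime) {m : ℕ} (hm : m ≠ 0)
    {z : ℂ} {k : ℕ} (hzp : z ^ p ^ k = 1) (hzm : z ^ m = 1) :
    z ^ p ^ (m.factorization p) = 1 := by
  have h1 : orderOf z ∣ p ^ k := orderOf_dvd_of_pow_eq_one hzp
  obtain ⟨b, _, hbe⟩ := (Nat.dvd_prime_pow hp).mp h1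
  have h2 : p ^ b ∣ m := hbe ▸ orderOf_dvd_of_pow_eq_one hzm
  have h3 : b ≤ m.factorization p := (Nat.Prime.pow_dvd_iff_le_factorization hp hm).mp h2
  exact orderOf_dvd_iff_pow_eq_one.mp (hbe ▸ pow_dvd_pow p h3)

end Stmt14Aux

theorem stmt14 {p : ℕ} (hp : p.Prime) (hodd : Odd p) {P : Type} [Group P] [Fintype P]
    (hP : IsPGroup p P) (hclass : Subgroup.lowerCentralSeries (⊤ : Subgroup P) 3 = ⊥)
    (χ : P → ℂ) (hχ : IsIrreducibleCharacter P χ)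
    (x : P) (hx : χ x ≠ 0) (m : ℤ) :
    χ (x ^ m) ≠ 0 := by
  classical
  obtain ⟨V, hsimp, hchar⟩ := hχ
  haveI := hsimp
  open Stmt14Aux CategoryTheory Module in
  -- centrality of the second lower central series step
  have hc : ∀ z ∈ Subgroup.lowerCentralSeries (⊤ : Subgroup P) 2, ∀ g : P, Commute z g :=
    fun z hz g => Stmt14Aux.central2 hclass hz g
  have hΓab : ∀ u v : P, u ∈ Subgroup.lowerCentralSeries (⊤ : Subgroup P) 1 → v ∈ Subgroup.lowerCentralSeries (⊤ : Subgroup P) 1 →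
      Commute u v := fun u v hu hv => Stmt14Aux.gamma_abelian hclass hu hv
  have hxc : FDRep.character V x ≠ 0 := by rw [hchar]; exact hx
  rw [← hchar]
  -- reduce to natural powers
  suffices H : ∀ n : ℕ, FDRep.character V (x ^ n) ≠ 0 by
    have hordpos : (0:ℤ) < (orderOf x : ℤ) := by
      exact_mod_cast orderOf_pos x
    have hmod : x ^ m = x ^ ((m % (orderOf x : ℤ)).toNat) := by
      rw [← zpow_natCast, Int.toNat_of_nonneg (Int.emod_nonneg m (ne_of_gt hordpos)),
        zpow_mod_orderOf]
    rw [hmod]; exact H _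
  intro n
  -- dimension is nonzero
  have hpos : 0 < Module.finrank ℂ V := by
    by_contra hle
    have h0 : Module.finrank ℂ V = 0 := by omega
    have hsub : Subsingleton V := Module.finrank_zero_iff.mp h0
    apply CategoryTheory.id_nonzero V
    have : (CategoryTheory.CategoryStruct.id V : V ⟶ V).hom
        = (0 : V ⟶ V).hom := by
      apply FGModuleCat.hom_ext
      apply LinearMap.ext
      intro v
      exact @Subsingleton.elim V hsub _ _
    exact Action.hom_ext _ _ this
  have hdC : (Module.finrank ℂ V : ℂ) ≠ 0 := Nat.cast_ne_zero.mpr hpos.ne'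
  have hNontriv : Nontrivial V := Module.nontrivial_of_finrank_pos hpos
  have hcard : (Fintype.card P : ℂ) ≠ 0 := Nat.cast_ne_zero.mpr Fintype.card_ne_zero
  -- Schur: the averaged operator is a scalar
  have hscal : ∀ g : P, ∃ c : ℂ,
      (∑ h : P, V.ρ (h * g * h⁻¹)) = c • (LinearMap.id : V →ₗ[ℂ] V) := by
    intro g
    have hcomm : ∀ k : P, V.ρ k * (∑ h : P, V.ρ (h * g * h⁻¹))
        = (∑ h : P, V.ρ (h * g * h⁻¹)) * V.ρ k := by
      intro k
      calc V.ρ k * ∑ h : P, V.ρ (h * g * h⁻¹)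
          = ∑ h : P, V.ρ k * V.ρ (h * g * h⁻¹) := by rw [Finset.mul_sum]
        _ = ∑ h : P, V.ρ ((k * h) * g * (k * h)⁻¹) * V.ρ k := by
            refine Finset.sum_congr rfl (fun h _ => ?_)
            rw [← map_mul, ← map_mul]
            congr 1
            group
        _ = (∑ h : P, V.ρ (h * g * h⁻¹)) * V.ρ k := by
            rw [Finset.sum_mul]
            exact Equiv.sum_comp (Equiv.mulLeft k)
              (fun h => V.ρ (h * g * h⁻¹) * V.ρ k)
    let f : V ⟶ V := ⟨FGModuleCat.ofHom (∑ h : P, V.ρ (h * g * h⁻¹)), by intro k; ext v; exact LinearMap.congr_fun (hcomm k).symm v⟩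
    obtain ⟨c, hc'⟩ := CategoryTheory.endomorphism_simple_eq_smul_id ℂ f
    refine ⟨c, ?_⟩
    have h2 := congrArg Action.Hom.hom hc'
    simp only [Action.smul_hom, Action.id_hom, f] at h2
    exact (congrArg (fun φ => φ.hom.hom) h2).symm
  -- trace of the averaged operator
  have htrace : ∀ g : P, LinearMap.trace ℂ V (∑ h : P, V.ρ (h * g * h⁻¹))
      = (Fintype.card P : ℂ) * FDRep.character V g := by
    intro g
    rw [map_sum]
    have : ∀ h : P, LinearMap.trace ℂ V (V.ρ (h * g * h⁻¹)) = FDRep.character V g :=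
      fun h => FDRep.char_conj V g h
    rw [Finset.sum_congr rfl (fun h _ => this h), Finset.sum_const, Finset.card_univ,
      nsmul_eq_mul]
  -- characterization of nonvanishing
  have hidne : (LinearMap.id : V →ₗ[ℂ] V) ≠ 0 := by
    intro hid
    obtain ⟨v, hv⟩ := exists_ne (0 : V)
    exact hv (by simpa using LinearMap.ext_iff.mp hid v)
  have hcharNZ : ∀ g : P,
      (FDRep.character V g ≠ 0 ↔ (∑ h : P, V.ρ (h * g * h⁻¹)) ≠ 0) := by
    intro g
    obtain ⟨c, hcE⟩ := hscal g
    have ht : (Fintype.card P : ℂ) * FDRep.character V g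
        = c * (Module.finrank ℂ V : ℂ) := by
      rw [← htrace g, hcE, map_smul, LinearMap.trace_id, smul_eq_mul]
    constructor
    · intro hne h0
      rw [hcE] at h0
      rcases smul_eq_zero.mp h0 with h1 | h1
      · rw [h1, zero_mul] at ht
        exact hne (by
          rcases mul_eq_zero.mp ht with h2 | h2
          · exact absurd h2 hcard
          · exact h2)
      · exact hidne h1
    · intro hne h0
      rw [h0, mul_zero] at ht
      rcases mul_eq_zero.mp ht.symm with h1 | h1
      · rw [h1, zero_smul] at hcE
        exact hne hcE
      · exact hdC h1
  -- factorization through psiF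
  have hfactor : ∀ j : ℕ, (∑ h : P, V.ρ (h * x ^ j * h⁻¹))
      = V.ρ (x ^ j) * (∑ h : P, V.ρ (Stmt14Aux.psiF x j h)) := by
    intro j
    rw [Finset.mul_sum]
    refine Finset.sum_congr rfl (fun h _ => ?_)
    rw [← map_mul]
    congr 1
    unfold Stmt14Aux.psiF
    group
  have hSmNZ : ∀ j : ℕ, (∑ h : P, V.ρ (Stmt14Aux.psiF x j h)) ≠ 0 →
      FDRep.character V (x ^ j) ≠ 0 := by
    intro j hS
    rw [hcharNZ, hfactor j]
    intro h0
    apply hS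
    have h1 : (∑ h : P, V.ρ (Stmt14Aux.psiF x j h))
        = V.ρ ((x ^ j)⁻¹) * (V.ρ (x ^ j) * ∑ h : P, V.ρ (Stmt14Aux.psiF x j h)) := by
      rw [← mul_assoc, ← map_mul, inv_mul_cancel, map_one, one_mul]
    rw [h1, h0, mul_zero]
  have hS1 : (∑ h : P, V.ρ (Stmt14Aux.psiF x 1 h)) ≠ 0 := by
    intro h0
    apply (hcharNZ x).mp hxc
    have h2 := hfactor 1
    rw [h0, mul_zero] at h2
    rw [pow_one] at h2
    exact h2
  -- simultaneous eigenvector machinery for the derived subgroup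
  have hcommF : Pairwise fun (u v : (Subgroup.lowerCentralSeries (⊤ : Subgroup P) 1 : Subgroup P)) =>
      Commute (V.ρ (u : P)) (V.ρ (v : P)) := by
    intro u v _
    show V.ρ (u : P) * V.ρ (v : P) = V.ρ (v : P) * V.ρ (u : P)
    rw [← map_mul, ← map_mul, (hΓab _ _ u.2 v.2).eq]
  have hss : ∀ u : (Subgroup.lowerCentralSeries (⊤ : Subgroup P) 1 : Subgroup P),
      Module.End.IsFinitelySemisimple (V.ρ (u : P)) := by
    intro u
    obtain ⟨k, hk⟩ := hP (u : P)
    have hkne : p ^ k ≠ 0 := (pow_pos hp.pos k).ne'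
    have hsq : Squarefree (Polynomial.X ^ (p ^ k) - 1 : Polynomial ℂ) :=
      (Polynomial.X_pow_sub_one_separable_iff.mpr (by exact_mod_cast hkne)).squarefree
    have haev : Polynomial.aeval (V.ρ (u : P))
        (Polynomial.X ^ (p ^ k) - 1 : Polynomial ℂ) = 0 := by
      have h2 : (V.ρ (u : P)) ^ (p ^ k) = 1 := by rw [← map_pow, hk, map_one]
      rw [map_sub, map_pow, Polynomial.aeval_X, map_one, h2, sub_self]
    exact (Module.End.isSemisimple_of_squarefree_aeval_eq_zero hsq haev).isFinitelySemisimple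
  have htop : ⨆ μ : (Subgroup.lowerCentralSeries (⊤ : Subgroup P) 1 : Subgroup P) → ℂ,
      ⨅ u : (Subgroup.lowerCentralSeries (⊤ : Subgroup P) 1 : Subgroup P),
        Module.End.eigenspace (V.ρ (u : P)) (μ u) = ⊤ := by
    have h1 := Module.End.iSup_iInf_maxGenEigenspace_eq_top_of_iSup_maxGenEigenspace_eq_top_of_commute
      (fun u : (Subgroup.lowerCentralSeries (⊤ : Subgroup P) 1 : Subgroup P) => V.ρ (u : P)) hcommF
      (fun u => Module.End.iSup_maxGenEigenspace_eq_top _)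
    simp_rw [fun (u : (Subgroup.lowerCentralSeries (⊤ : Subgroup P) 1 : Subgroup P)) (μ : ℂ) =>
      (hss u).maxGenEigenspace_eq_eigenspace μ] at h1
    exact h1
  -- extract an eigencharacter not killed by S₁
  have hext : ∃ (μ₀ : (Subgroup.lowerCentralSeries (⊤ : Subgroup P) 1 : Subgroup P) → ℂ) (v₀ : V),
      (∀ u : (Subgroup.lowerCentralSeries (⊤ : Subgroup P) 1 : Subgroup P), V.ρ (u : P) v₀ = μ₀ u • v₀) ∧
      (∑ h : P, V.ρ (Stmt14Aux.psiF x 1 h)) v₀ ≠ 0 := by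
    by_contra hno
    push_neg at hno
    apply hS1
    have hker : ∀ μ : (Subgroup.lowerCentralSeries (⊤ : Subgroup P) 1 : Subgroup P) → ℂ,
        (⨅ u : (Subgroup.lowerCentralSeries (⊤ : Subgroup P) 1 : Subgroup P),
          Module.End.eigenspace (V.ρ (u : P)) (μ u)) ≤
          LinearMap.ker (∑ h : P, V.ρ (Stmt14Aux.psiF x 1 h)) := by
      intro μ v hv
      rw [LinearMap.mem_ker]
      exact hno μ v (fun u =>
        Module.End.mem_eigenspace_iff.mp ((Submodule.mem_iInf _).mp hv u))
    rw [← LinearMap.ker_eq_top]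
    rw [eq_top_iff, ← htop]
    exact iSup_le hker
  obtain ⟨μ₀, v₀, hv₀eig, hS1v₀⟩ := hext
  have hv₀ne : v₀ ≠ 0 := fun h0 => hS1v₀ (by rw [h0, map_zero])
  -- the eigen-character ν
  set ν : P → ℂ := fun w =>
    if hw : w ∈ Subgroup.lowerCentralSeries (⊤ : Subgroup P) 1 then μ₀ ⟨w, hw⟩ else 1 with hνdef
  have hν : ∀ w, w ∈ Subgroup.lowerCentralSeries (⊤ : Subgroup P) 1 → V.ρ w v₀ = ν w • v₀ := by
    intro w hw
    rw [hνdef]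
    simp only [dif_pos hw]
    exact hv₀eig ⟨w, hw⟩
  have hcancel : ∀ a b : ℂ, a • v₀ = b • v₀ → a = b :=
    fun a b hab => smul_left_injective ℂ hv₀ne hab
  have hνmul : ∀ w₁ w₂, w₁ ∈ Subgroup.lowerCentralSeries (⊤ : Subgroup P) 1 → w₂ ∈ Subgroup.lowerCentralSeries (⊤ : Subgroup P) 1 →
      ν (w₁ * w₂) = ν w₁ * ν w₂ := by
    intro w₁ w₂ h₁ h₂
    apply hcancel
    rw [← hν _ (mul_mem h₁ h₂), map_mul, Module.End.mul_apply, hν _ h₂, map_smul,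
      hν _ h₁, smul_smul, mul_comm (ν w₂)]
  have hν1 : ν 1 = 1 := by
    apply hcancel
    rw [← hν 1 (one_mem _), map_one, Module.End.one_apply, one_smul]
  have hνpow : ∀ w, w ∈ Subgroup.lowerCentralSeries (⊤ : Subgroup P) 1 → ∀ j : ℕ, ν (w ^ j) = ν w ^ j := by
    intro w hw j
    induction j with
    | zero => simpa using hν1
    | succ j ih => rw [pow_succ, hνmul _ _ (Subgroup.pow_mem _ hw j) hw, ih, pow_succ]
  have hνroot : ∀ w, w ∈ Subgroup.lowerCentralSeries (⊤ : Subgroup P) 1 → ∃ k : ℕ, ν w ^ p ^ k = 1 := by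
    intro w hw
    obtain ⟨k, hk⟩ := hP w
    exact ⟨k, by rw [← hνpow w hw, hk, hν1]⟩
  have hνne : ∀ w, w ∈ Subgroup.lowerCentralSeries (⊤ : Subgroup P) 1 → ν w ≠ 0 := by
    intro w hw
    obtain ⟨k, hk⟩ := hνroot w hw
    exact Stmt14Aux.root_ne_zero _ _ (pow_pos hp.pos k).ne' hk
  have hνconj : ∀ w, w ∈ Subgroup.lowerCentralSeries (⊤ : Subgroup P) 1 →
      (starRingEnd ℂ) (ν w) = (ν w)⁻¹ := by
    intro w hw
    obtain ⟨k, hk⟩ := hνroot w hw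
    exact Stmt14Aux.conj_root _ _ (pow_pos hp.pos k).ne' hk
  have hcoΓ : ∀ w k : P, w ∈ Subgroup.lowerCentralSeries (⊤ : Subgroup P) 1 →
      Stmt14Aux.coF w k ∈ Subgroup.lowerCentralSeries (⊤ : Subgroup P) 1 :=
    fun w k hw => Stmt14Aux.lcs2_le_lcs1 (Stmt14Aux.coF_mem hw k)
  have hSv : ∀ j : ℕ, (∑ h : P, V.ρ (Stmt14Aux.psiF x j h)) v₀
      = (∑ h : P, ν (Stmt14Aux.psiF x j h)) • v₀ := by
    intro j
    rw [LinearMap.sum_apply, Finset.sum_smul]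
    exact Finset.sum_congr rfl (fun h _ => hν _ (Stmt14Aux.psiF_mem x j h))
  have hF1 : (∑ h : P, ν (Stmt14Aux.psiF x 1 h)) ≠ 0 :=
    fun h0 => hS1v₀ (by rw [hSv 1, h0, zero_smul])
  -- the Gauss-sum formula
  have hGauss : ∀ j : ℕ,
      (∑ h : P, ν (Stmt14Aux.psiF x j h)) * (starRingEnd ℂ) (∑ h : P, ν (Stmt14Aux.psiF x j h))
      = (∑ u ∈ Finset.univ.filter
          (fun u : P => ∀ k : P, (ν (Stmt14Aux.coF (Stmt14Aux.psiF x 1 u) k)) ^ j = 1),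
          ν (Stmt14Aux.psiF x j u)) * (Fintype.card P : ℂ) := by
    intro j
    have hψΓ : ∀ h : P, Stmt14Aux.psiF x j h ∈ Subgroup.lowerCentralSeries (⊤ : Subgroup P) 1 :=
      Stmt14Aux.psiF_mem x j
    have step1 : ∀ k : P, (∑ h : P, ν (Stmt14Aux.psiF x j h)) * (starRingEnd ℂ) (ν (Stmt14Aux.psiF x j k))
        = ∑ u : P, ν (Stmt14Aux.psiF x j u) * ν (Stmt14Aux.coF (Stmt14Aux.psiF x j u) k) := by
      intro k
      rw [hνconj _ (hψΓ k),
        ← Equiv.sum_comp (Equiv.mulLeft k) (fun h => ν (Stmt14Aux.psiF x j h)),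
        Finset.sum_mul]
      refine Finset.sum_congr rfl (fun u _ => ?_)
      have e1 : ν (Stmt14Aux.psiF x j ((Equiv.mulLeft k) u))
          = ν (Stmt14Aux.psiF x j k) * ν (Stmt14Aux.psiF x j u)
            * ν (Stmt14Aux.coF (Stmt14Aux.psiF x j u) k) := by
        rw [Equiv.coe_mulLeft, Stmt14Aux.psiF_mul x j k u,
          hνmul _ _ (mul_mem (hψΓ k) (hψΓ u)) (hcoΓ _ _ (hψΓ u)),
          hνmul _ _ (hψΓ k) (hψΓ u)]
      rw [e1]
      have hne := hνne _ (hψΓ k)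
      field_simp
    calc (∑ h : P, ν (Stmt14Aux.psiF x j h)) * (starRingEnd ℂ) (∑ h : P, ν (Stmt14Aux.psiF x j h))
        = ∑ k : P, (∑ h : P, ν (Stmt14Aux.psiF x j h)) * (starRingEnd ℂ) (ν (Stmt14Aux.psiF x j k)) := by
          rw [map_sum, Finset.mul_sum]
      _ = ∑ k : P, ∑ u : P, ν (Stmt14Aux.psiF x j u) * ν (Stmt14Aux.coF (Stmt14Aux.psiF x j u) k) :=
          Finset.sum_congr rfl (fun k _ => step1 k)
      _ = ∑ u : P, ∑ k : P, ν (Stmt14Aux.psiF x j u) * ν (Stmt14Aux.coF (Stmt14Aux.psiF x j u) k) :=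
          Finset.sum_comm
      _ = ∑ u : P, ν (Stmt14Aux.psiF x j u) * (∑ k : P, (ν (Stmt14Aux.coF (Stmt14Aux.psiF x 1 u) k)) ^ j) := by
          refine Finset.sum_congr rfl (fun u _ => ?_)
          rw [Finset.mul_sum]
          refine Finset.sum_congr rfl (fun k _ => ?_)
          rw [Stmt14Aux.coF_psiF_pow hc x j u k, hνpow _ (hcoΓ _ _ (Stmt14Aux.psiF_mem x 1 u))]
      _ = ∑ u : P, (if (∀ k : P, (ν (Stmt14Aux.coF (Stmt14Aux.psiF x 1 u) k)) ^ j = 1)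
            then ν (Stmt14Aux.psiF x j u) * (Fintype.card P : ℂ) else 0) := by
          refine Finset.sum_congr rfl (fun u _ => ?_)
          by_cases hcond : ∀ k : P, (ν (Stmt14Aux.coF (Stmt14Aux.psiF x 1 u) k)) ^ j = 1
          · rw [if_pos hcond, Finset.sum_congr rfl (fun k _ => hcond k), Finset.sum_const,
              Finset.card_univ, nsmul_eq_mul, mul_one]
          · rw [if_neg hcond]
            push_neg at hcond
            obtain ⟨k₀, hk₀⟩ := hcond
            have hmul : ∀ a b : P,
                (ν (Stmt14Aux.coF (Stmt14Aux.psiF x 1 u) (a * b))) ^ j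
                = (ν (Stmt14Aux.coF (Stmt14Aux.psiF x 1 u) a)) ^ j
                  * (ν (Stmt14Aux.coF (Stmt14Aux.psiF x 1 u) b)) ^ j := by
              intro a b
              rw [Stmt14Aux.coF_mul_right hc (Stmt14Aux.psiF_mem x 1 u) a b,
                hνmul _ _ (hcoΓ _ _ (Stmt14Aux.psiF_mem x 1 u)) (hcoΓ _ _ (Stmt14Aux.psiF_mem x 1 u)),
                mul_pow]
            rw [Stmt14Aux.sum_hom_eq_zero _ hmul k₀ hk₀, mul_zero]
      _ = ∑ u ∈ Finset.univ.filter
            (fun u : P => ∀ k : P, (ν (Stmt14Aux.coF (Stmt14Aux.psiF x 1 u) k)) ^ j = 1),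
            ν (Stmt14Aux.psiF x j u) * (Fintype.card P : ℂ) := (Finset.sum_filter _ _).symm
      _ = (∑ u ∈ Finset.univ.filter
            (fun u : P => ∀ k : P, (ν (Stmt14Aux.coF (Stmt14Aux.psiF x 1 u) k)) ^ j = 1),
            ν (Stmt14Aux.psiF x j u)) * (Fintype.card P : ℂ) := (Finset.sum_mul _ _ _).symm
  -- value lemma on the "radical"
  have hval : ∀ a b : P, (∀ k : P, ν (Stmt14Aux.coF (Stmt14Aux.psiF x 1 b) k) = 1) →
      ν (Stmt14Aux.psiF x 1 (a * b)) = ν (Stmt14Aux.psiF x 1 a) * ν (Stmt14Aux.psiF x 1 b) := by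
    intro a b hb
    rw [Stmt14Aux.psiF_mul x 1 a b,
      hνmul _ _ (mul_mem (Stmt14Aux.psiF_mem x 1 a) (Stmt14Aux.psiF_mem x 1 b))
        (hcoΓ _ _ (Stmt14Aux.psiF_mem x 1 b)),
      hνmul _ _ (Stmt14Aux.psiF_mem x 1 a) (Stmt14Aux.psiF_mem x 1 b),
      hb a, mul_one]
  -- conclusion from the j = 1 case: ν∘ψ₁ is trivial on the radical
  have hR1 : ∀ u₀ : P, (∀ k : P, ν (Stmt14Aux.coF (Stmt14Aux.psiF x 1 u₀) k) = 1) →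
      ν (Stmt14Aux.psiF x 1 u₀) = 1 := by
    intro u₀ hu₀
    by_contra hne1
    have hG1 := hGauss 1
    simp only [pow_one] at hG1
    have hconjne : (starRingEnd ℂ) (∑ h : P, ν (Stmt14Aux.psiF x 1 h)) ≠ 0 := by
      intro h0
      apply hF1
      have := congrArg (starRingEnd ℂ) h0
      simpa using this
    have hTne : (∑ u ∈ Finset.univ.filter
        (fun u : P => ∀ k : P, ν (Stmt14Aux.coF (Stmt14Aux.psiF x 1 u) k) = 1),
        ν (Stmt14Aux.psiF x 1 u)) ≠ 0 := by
      intro h0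
      rw [h0, zero_mul] at hG1
      exact (mul_ne_zero hF1 hconjne) hG1
    apply hTne
    -- translation by u₀
    have hmemiff : ∀ a : P, (∀ k : P, ν (Stmt14Aux.coF (Stmt14Aux.psiF x 1 a) k) = 1) →
        ∀ b : P, ((∀ k : P, ν (Stmt14Aux.coF (Stmt14Aux.psiF x 1 (a * b)) k) = 1) ↔
          (∀ k : P, ν (Stmt14Aux.coF (Stmt14Aux.psiF x 1 b) k) = 1)) := by
      intro a ha b
      constructor
      · intro hab k
        have h1 : ν (Stmt14Aux.coF (Stmt14Aux.psiF x 1 (a * b)) k)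
            = ν (Stmt14Aux.coF (Stmt14Aux.psiF x 1 a) k)
              * ν (Stmt14Aux.coF (Stmt14Aux.psiF x 1 b) k) := by
          rw [Stmt14Aux.coF_psiF_mul hc x 1 a b,
            hνmul _ _ (hcoΓ _ _ (Stmt14Aux.psiF_mem x 1 a)) (hcoΓ _ _ (Stmt14Aux.psiF_mem x 1 b))]
        rw [hab k, ha k, one_mul] at h1
        exact h1.symm
      · intro hb k
        rw [Stmt14Aux.coF_psiF_mul hc x 1 a b,
          hνmul _ _ (hcoΓ _ _ (Stmt14Aux.psiF_mem x 1 a)) (hcoΓ _ _ (Stmt14Aux.psiF_mem x 1 b)),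
          ha k, hb k, one_mul]
    have hstep : ∑ u ∈ Finset.univ.filter
        (fun u : P => ∀ k : P, ν (Stmt14Aux.coF (Stmt14Aux.psiF x 1 u) k) = 1),
        ν (Stmt14Aux.psiF x 1 u)
        = ν (Stmt14Aux.psiF x 1 u₀) * ∑ u ∈ Finset.univ.filter
        (fun u : P => ∀ k : P, ν (Stmt14Aux.coF (Stmt14Aux.psiF x 1 u) k) = 1),
        ν (Stmt14Aux.psiF x 1 u) := by
      rw [Finset.mul_sum]
      refine Finset.sum_nbij' (fun u => u₀⁻¹ * u) (fun u => u₀ * u) ?_ ?_ ?_ ?_ ?_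
      · intro a ha
        simp only [Finset.mem_filter, Finset.mem_univ, true_and] at ha ⊢
        intro k
        have := (hmemiff u₀ hu₀ (u₀⁻¹ * a)).mp (by
          rw [mul_inv_cancel_left]; exact ha)
        exact this k
      · intro a ha
        simp only [Finset.mem_filter, Finset.mem_univ, true_and] at ha ⊢
        intro k
        exact (hmemiff u₀ hu₀ a).mpr ha k
      · intro a _; show u₀ * (u₀⁻¹ * a) = a; rw [mul_inv_cancel_left]
      · intro a _; show u₀⁻¹ * (u₀ * a) = a; rw [inv_mul_cancel_left]
      · intro a ha
        simp only [Finset.mem_filter, Finset.mem_univ, true_and] at ha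
        have hmem : ∀ k : P, ν (Stmt14Aux.coF (Stmt14Aux.psiF x 1 (u₀⁻¹ * a)) k) = 1 :=
          (hmemiff u₀ hu₀ (u₀⁻¹ * a)).mp (by rw [mul_inv_cancel_left]; exact ha)
        have := hval u₀ (u₀⁻¹ * a) hmem
        rw [mul_inv_cancel_left] at this
        exact this
    have h2 : (ν (Stmt14Aux.psiF x 1 u₀) - 1) * (∑ u ∈ Finset.univ.filter
        (fun u : P => ∀ k : P, ν (Stmt14Aux.coF (Stmt14Aux.psiF x 1 u) k) = 1),
        ν (Stmt14Aux.psiF x 1 u)) = 0 := by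
      linear_combination -hstep
    rcases mul_eq_zero.mp h2 with h3 | h3
    · exact absurd (by linear_combination h3) hne1
    · exact h3
  -- endgame
  rcases Nat.eq_zero_or_pos n with hn0 | hnpos
  · subst hn0
    rw [pow_zero, FDRep.char_one]
    exact hdC
  have hn0 : n ≠ 0 := hnpos.ne'
  apply hSmNZ n
  have hFn : (∑ h : P, ν (Stmt14Aux.psiF x n h)) ≠ 0 := by
    have htriv : ∀ u : P, (∀ k : P, (ν (Stmt14Aux.coF (Stmt14Aux.psiF x 1 u) k)) ^ n = 1) →
        ν (Stmt14Aux.psiF x n u) = 1 := by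
      intro u hu
      set t := n.factorization p with ht
      have hptn : p ^ t ∣ n := Nat.ordProj_dvd n p
      have za : ∀ k : P, (ν (Stmt14Aux.coF (Stmt14Aux.psiF x 1 u) k)) ^ p ^ t = 1 := by
        intro k
        obtain ⟨kk, hkk⟩ := hνroot _ (hcoΓ _ _ (Stmt14Aux.psiF_mem x 1 u))
        exact Stmt14Aux.root_pow_padic hp hn0 hkk (hu k)
      have hb : ∀ k : P, ν (Stmt14Aux.coF (Stmt14Aux.psiF x 1 (u ^ p ^ t)) k) = 1 := by
        intro k
        rw [Stmt14Aux.coF_psiF_base_pow hc x u k (p ^ t),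
          hνpow _ (hcoΓ _ _ (Stmt14Aux.psiF_mem x 1 u))]
        exact za k
      have h1 : ν (Stmt14Aux.psiF x 1 (u ^ p ^ t)) = 1 := hR1 _ hb
      have hexp := Stmt14Aux.psiF_base_pow hc x u (p ^ t)
      have h2 : ν (Stmt14Aux.psiF x 1 u) ^ p ^ t
          * ν (Stmt14Aux.coF (Stmt14Aux.psiF x 1 u) u) ^ ((p ^ t).choose 2) = 1 := by
        rw [← hνpow _ (Stmt14Aux.psiF_mem x 1 u),
          ← hνpow _ (hcoΓ _ _ (Stmt14Aux.psiF_mem x 1 u)),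
          ← hνmul _ _ (Subgroup.pow_mem _ (Stmt14Aux.psiF_mem x 1 u) _)
            (Subgroup.pow_mem _ (hcoΓ _ _ (Stmt14Aux.psiF_mem x 1 u)) _),
          ← hexp]
        exact h1
      have hE : ν (Stmt14Aux.coF (Stmt14Aux.psiF x 1 u) u) ^ ((p ^ t).choose 2) = 1 :=
        Stmt14Aux.pow_eq_one_of_dvd (za u) (Stmt14Aux.prime_pow_dvd_choose_two hodd (dvd_refl _))
      have hA : ν (Stmt14Aux.psiF x 1 u) ^ p ^ t = 1 := by
        rw [hE, mul_one] at h2; exact h2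
      rw [Stmt14Aux.psiF_pow_formula hc x n u,
        hνmul _ _ (Subgroup.pow_mem _ (Stmt14Aux.psiF_mem x 1 u) _)
          (Subgroup.pow_mem _ (hcoΓ _ _ (Stmt14Aux.psiF_mem x 1 u)) _),
        hνpow _ (Stmt14Aux.psiF_mem x 1 u), hνpow _ (hcoΓ _ _ (Stmt14Aux.psiF_mem x 1 u)),
        Stmt14Aux.pow_eq_one_of_dvd hA hptn,
        Stmt14Aux.pow_eq_one_of_dvd (za x⁻¹) (Stmt14Aux.prime_pow_dvd_choose_two hodd hptn),
        one_mul]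
    have h1mem : (1 : P) ∈ Finset.univ.filter
        (fun u : P => ∀ k : P, (ν (Stmt14Aux.coF (Stmt14Aux.psiF x 1 u) k)) ^ n = 1) := by
      simp only [Finset.mem_filter, Finset.mem_univ, true_and]
      intro k
      rw [Stmt14Aux.psiF_one, Stmt14Aux.coF_one_left, hν1, one_pow]
    have hcardf : ((Finset.univ.filter
        (fun u : P => ∀ k : P, (ν (Stmt14Aux.coF (Stmt14Aux.psiF x 1 u) k)) ^ n = 1)).card : ℂ)
        ≠ 0 :=
      Nat.cast_ne_zero.mpr (Finset.card_pos.mpr ⟨1, h1mem⟩).ne'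
    intro hF0
    have hGn := hGauss n
    rw [hF0, zero_mul] at hGn
    have hTn : (∑ u ∈ Finset.univ.filter
        (fun u : P => ∀ k : P, (ν (Stmt14Aux.coF (Stmt14Aux.psiF x 1 u) k)) ^ n = 1),
        ν (Stmt14Aux.psiF x n u))
        = ((Finset.univ.filter
        (fun u : P => ∀ k : P, (ν (Stmt14Aux.coF (Stmt14Aux.psiF x 1 u) k)) ^ n = 1)).card : ℂ) := by
      rw [Finset.sum_congr rfl (fun u hu => htriv u
        ((Finset.mem_filter.mp hu).2)), Finset.sum_const, nsmul_eq_mul, mul_one]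
    rw [hTn] at hGn
    exact (mul_ne_zero hcardf hcard) hGn.symm
  intro hSn0
  apply hFn
  have h3 := hSv n
  rw [hSn0, LinearMap.zero_apply] at h3
  rcases smul_eq_zero.mp h3.symm with h4 | h4
  · exact h4
  · exact absurd h4 hv₀ne
end

section
/- Let P be a p-group with maximal abelian normal subgroup A of order p^m. Then |P| ≤ p^{m(m+1)/2}. -/
open scoped BigOperators

private lemma tri_step (m : ℕ) : m * (m - 1) / 2 + m = (m + 1) * m / 2 := by
  rcases m with _ | j
  · simp
  · obtain ⟨c, hc⟩ := Nat.even_mul_succ_self j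
    have hc' : (j + 1) * (j + 1 - 1) = c + c := by
      simpa [Nat.mul_comm] using hc
    have e1 : (j + 1 + 1) * (j + 1) = (c + c) + 2 * (j + 1) := by
      have : (j + 1 + 1) * (j + 1) = j * (j + 1) + 2 * (j + 1) := by ring
      rw [this, hc]
    rw [hc', e1]
    omega

private lemma card_hom_le {B C : Type} [CommGroup B] [Finite B] [CommGroup C] [Finite C]
    (χ : C →* ℂˣ) (hχ : Function.Injective χ) :
    Nat.card (B →* C) ≤ Nat.card B := by
  haveI : NeZero ((Monoid.exponent B : ℂ)) :=
    ⟨Nat.cast_ne_zero.mpr (Monoid.exponent_ne_zero_of_finite)⟩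
  haveI : HasEnoughRootsOfUnity ℂ (Monoid.exponent B) := inferInstance
  obtain ⟨e⟩ := CommGroup.monoidHom_mulEquiv_of_hasEnoughRootsOfUnity B ℂ
  have hfin : Finite (B →* ℂˣ) := Finite.of_equiv B e.symm.toEquiv
  have hinj : Function.Injective (fun f : B →* C => χ.comp f) := by
    intro f g h
    ext b
    exact hχ (DFunLike.congr_fun h b)
  calc Nat.card (B →* C) ≤ Nat.card (B →* ℂˣ) := Nat.card_le_card_of_injective _ hinj
    _ = Nat.card B := Nat.card_congr e.toEquiv

private lemma exists_inj_char {p : ℕ} (hp : p.Prime) (C : Type) [CommGroup C] [Finite C]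
    (hC : Nat.card C = p) : ∃ χ : C →* ℂˣ, Function.Injective χ := by
  haveI : NeZero ((Monoid.exponent C : ℂ)) :=
    ⟨Nat.cast_ne_zero.mpr (Monoid.exponent_ne_zero_of_finite)⟩
  have : Nontrivial C := by
    rw [← Finite.one_lt_card_iff_nontrivial, hC]
    exact hp.one_lt
  obtain ⟨a, ha⟩ := exists_ne (1 : C)
  obtain ⟨χ, hχa⟩ := CommGroup.exists_apply_ne_one_of_hasEnoughRootsOfUnity C ℂ ha
  refine ⟨χ, ?_⟩
  rw [← MonoidHom.ker_eq_bot_iff]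
  have hdvd : Nat.card χ.ker ∣ p := hC ▸ Subgroup.card_subgroup_dvd_card χ.ker
  rcases (Nat.dvd_prime hp).mp hdvd with h | h
  · exact Subgroup.eq_bot_of_card_eq _ h
  · exfalso
    have : χ.ker = ⊤ := Subgroup.eq_top_of_card_eq _ (by rw [h, hC])
    have hmem : a ∈ χ.ker := this ▸ Subgroup.mem_top a
    exact hχa (MonoidHom.mem_ker.mp hmem)


private lemma key_aux {p : ℕ} (hp : p.Prime) (m : ℕ) :
    ∀ (A : Type) [CommGroup A] [Finite A], Nat.card A = p ^ m →
    ∀ (Q : Type) [Group Q] [Finite Q], IsPGroup p Q →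
    ∀ (φ : Q →* MulAut A), Function.Injective φ →
    Nat.card Q ≤ p ^ (m * (m - 1) / 2) := by
  induction m with
  | zero =>
    intro A _ _ hA Q _ _ hQ φ hφ
    have hsub : Subsingleton A := (Nat.card_eq_one_iff_unique.mp (by simpa using hA)).1
    have hQ1 : ∀ q : Q, q = 1 := fun q => hφ (by
      ext a
      exact Subsingleton.elim _ _)
    have : Subsingleton Q := ⟨fun a b => (hQ1 a).trans (hQ1 b).symm⟩
    have : Nat.card Q = 1 := Nat.card_eq_one_iff_unique.mpr ⟨this, ⟨1⟩⟩
    simp [this]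
  | succ m ih =>
    intro A _ _ hA Q _ _ hQ φ hφ
    haveI : Fact p.Prime := ⟨hp⟩
    letI : MulAction Q A := MulAction.compHom A φ
    have smul_def : ∀ (q : Q) (a : A), q • a = φ q a := fun q a => rfl
    have h1fix : (1 : A) ∈ MulAction.fixedPoints Q A := fun q => by
      rw [smul_def, map_one]
    have hpdvd : p ∣ Nat.card A := hA ▸ dvd_pow_self p (Nat.succ_ne_zero m)
    obtain ⟨y, hyfix, hy1⟩ :=
      hQ.exists_fixed_point_of_prime_dvd_card_of_fixed_point A hpdvd h1fix
    have hy1 : y ≠ 1 := fun h => hy1 h.symm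
    have hyfix' : ∀ q : Q, φ q y = y := fun q => hyfix q
    obtain ⟨k, hk⟩ := IsPGroup.iff_orderOf.mp (IsPGroup.of_card hA) y
    have hk0 : k ≠ 0 := by
      rintro rfl
      rw [pow_zero] at hk
      exact hy1 (orderOf_eq_one_iff.mp hk)
    set z := y ^ (p ^ (k - 1)) with hz
    have hzp : z ^ p = 1 := by
      have hk1 : k - 1 + 1 = k := by omega
      rw [hz, ← pow_mul, ← pow_succ, hk1, ← hk, pow_orderOf_eq_one]
    have hzne : z ≠ 1 := by
      intro h
      have hdvd : orderOf y ∣ p ^ (k - 1) := orderOf_dvd_of_pow_eq_one h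
      rw [hk] at hdvd
      have hle := Nat.le_of_dvd (Nat.pow_pos hp.pos) hdvd
      have hlt := Nat.pow_lt_pow_right hp.one_lt (show k - 1 < k by omega)
      omega
    have hordz : orderOf z = p := by
      have h1 : orderOf z ∣ p := orderOf_dvd_of_pow_eq_one hzp
      rcases (Nat.dvd_prime hp).mp h1 with h | h
      · exact absurd (orderOf_eq_one_iff.mp h) hzne
      · exact h
    have hzfix : ∀ q : Q, φ q z = z := fun q => by rw [hz, map_pow, hyfix' q]
    set Z := Subgroup.zpowers z with hZdef
    have hcardZ : Nat.card Z = p := by rw [hZdef, Nat.card_zpowers, hordz]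
    have hcardQuot : Nat.card (A ⧸ Z) = p ^ m := by
      have h := Subgroup.card_eq_card_quotient_mul_card_subgroup Z
      rw [hA, hcardZ, pow_succ] at h
      exact (Nat.eq_of_mul_eq_mul_right hp.pos h.symm)
    have hmapZ : ∀ q : Q, Z.map ((φ q : A ≃* A) : A →* A) = Z := by
      intro q
      rw [hZdef, MonoidHom.map_zpowers]
      simp [hzfix q]
    let ψ : Q → (A ⧸ Z ≃* A ⧸ Z) := fun q => QuotientGroup.congr Z Z (φ q) (hmapZ q)
    have hψ_mk : ∀ (q : Q) (a : A), ψ q ((a : A) : A ⧸ Z) = ((φ q a : A) : A ⧸ Z) := by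
      intro q a
      exact QuotientGroup.congr_mk Z Z (φ q) (hmapZ q) a
    let φ' : Q →* MulAut (A ⧸ Z) := MonoidHom.mk' ψ (by
      intro q r
      ext x
      refine QuotientGroup.induction_on x ?_
      intro a
      rw [MulAut.mul_apply, hψ_mk, hψ_mk, hψ_mk, map_mul, MulAut.mul_apply])
    set K := φ'.ker with hKdef
    have hQK : Nat.card (Q ⧸ K) ≤ p ^ (m * (m - 1) / 2) :=
      ih (A ⧸ Z) hcardQuot (Q ⧸ K) (hQ.to_quotient K) (QuotientGroup.kerLift φ')
        (QuotientGroup.kerLift_injective φ')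
    -- bound on K
    have hfZ : ∀ (k : Q), k ∈ K → ∀ a : A, a⁻¹ * φ k a ∈ Z := by
      intro k hk a
      have h3 : ψ k = (1 : MulAut (A ⧸ Z)) := hk
      have h2 : ((a : A) : A ⧸ Z) = ((φ k a : A) : A ⧸ Z) := by
        have h4 := hψ_mk k a
        rw [h3] at h4
        simpa using h4
      exact QuotientGroup.eq.mp h2
    have hφfix : ∀ (k : Q) (n : ℤ), φ k (z ^ n) = z ^ n := by
      intro k n
      rw [map_zpow, hzfix k]
    let f0 : K → (A →* A) := fun k =>
      { toFun := fun a => a⁻¹ * φ k a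
        map_one' := by simp
        map_mul' := by
          intro a b
          simp only [map_mul, mul_inv]
          exact mul_mul_mul_comm a⁻¹ b⁻¹ _ _ }
    let fhom : K → (A →* Z) := fun k => (f0 k).codRestrict Z (fun a => hfZ k k.2 a)
    have hkill : ∀ (k : K) (w : A), w ∈ Z → fhom k w = 1 := by
      rintro k w ⟨n, rfl⟩
      ext
      simp [fhom, f0, hφfix]
    let F : K → (A ⧸ Z →* Z) := fun k =>
      QuotientGroup.lift Z (fhom k) (fun w hw => hkill k w hw)
    have hFinj : Function.Injective F := by
      intro k k' h
      have heval : ∀ a : A, fhom k a = fhom k' a := by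
        intro a
        have := DFunLike.congr_fun h ((a : A) : A ⧸ Z)
        exact this
      have hφeq : φ (k : Q) = φ (k' : Q) := by
        ext a
        have h2 := congrArg Subtype.val (heval a)
        simp only [fhom, f0, MonoidHom.codRestrict_apply, MonoidHom.coe_mk, OneHom.coe_mk] at h2
        exact mul_left_cancel h2
      exact Subtype.ext (hφ hφeq)
    have hKle : Nat.card K ≤ p ^ m := by
      have hfin : Finite (A ⧸ Z →* Z) :=
        Finite.of_injective (fun f => (f : A ⧸ Z → Z)) DFunLike.coe_injective
      have h1 : Nat.card K ≤ Nat.card (A ⧸ Z →* Z) := Nat.card_le_card_of_injective F hFinj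
      obtain ⟨χ, hχ⟩ := exists_inj_char hp Z hcardZ
      have h2 := card_hom_le (B := A ⧸ Z) χ hχ
      rw [hcardQuot] at h2
      omega
    calc Nat.card Q = Nat.card (Q ⧸ K) * Nat.card K :=
          Subgroup.card_eq_card_quotient_mul_card_subgroup K
      _ ≤ p ^ (m * (m - 1) / 2) * p ^ m := Nat.mul_le_mul hQK hKle
      _ = p ^ (m * (m - 1) / 2 + m) := (pow_add p _ _).symm
      _ = p ^ ((m + 1) * m / 2) := by rw [tri_step]
      _ = p ^ ((m + 1) * ((m + 1) - 1) / 2) := by norm_num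

theorem stmt18 {p m : ℕ} (hp : p.Prime) {P : Type} [Group P] [Fintype P]
    (hP : IsPGroup p P) (A : Subgroup P) (hA : A.Normal) (hab : IsMulCommutative A)
    (hmax : ∀ B : Subgroup P, B.Normal → IsMulCommutative B → A ≤ B → B = A)
    (hcard : Nat.card A = p ^ m) :
    Nat.card P ≤ p ^ (m * (m + 1) / 2) := by
  haveI : Fact p.Prime := ⟨hp⟩
  haveI := hA
  haveI := hab
  set C := Subgroup.centralizer (A : Set P) with hCdef
  have hAC : A ≤ C := Subgroup.le_centralizer A
  have hCnormal : C.Normal := by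
    constructor
    intro g hg h
    rw [hCdef, Subgroup.mem_centralizer_iff] at hg ⊢
    intro a ha
    have ha' : h⁻¹ * a * h ∈ A := by
      have := hA.conj_mem a ha h⁻¹
      simpa using this
    have hcomm := hg (h⁻¹ * a * h) ha'
    calc a * (h * g * h⁻¹) = h * ((h⁻¹ * a * h) * g) * h⁻¹ := by group
      _ = h * (g * (h⁻¹ * a * h)) * h⁻¹ := by rw [hcomm]
      _ = (h * g * h⁻¹) * a := by group
  have hCA : C = A := by
    by_contra hne
    have hlt : ¬ C ≤ A := fun hle => hne (le_antisymm hle hAC)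
    obtain ⟨x0, hx0C, hx0A⟩ := SetLike.not_le_iff_exists.mp hlt
    set π := QuotientGroup.mk' A with hπdef
    set N := C.map π with hNdef
    haveI hNnormal : N.Normal := hCnormal.map π (QuotientGroup.mk'_surjective A)
    have hPQ : IsPGroup p (P ⧸ A) := hP.to_quotient A
    letI : MulAction (P ⧸ A) N := MulAction.compHom N (MulAut.conjNormal : (P ⧸ A) →* MulAut N)
    have smul_def : ∀ (q : P ⧸ A) (n : N), q • n = MulAut.conjNormal q n := fun q n => rfl
    have h1fix : (1 : N) ∈ MulAction.fixedPoints (P ⧸ A) N := fun q => by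
      rw [smul_def, map_one]
    have hpdvdN : p ∣ Nat.card N := by
      have hNp : IsPGroup p N := hPQ.to_subgroup N
      have hNnt : Nontrivial N := by
        have hx0N : π x0 ∈ N := Subgroup.mem_map_of_mem π hx0C
        have hne1 : π x0 ≠ 1 := by
          intro h
          exact hx0A ((QuotientGroup.eq_one_iff x0).mp h)
        exact ⟨⟨π x0, hx0N⟩, 1, by simpa [Subtype.ext_iff] using hne1⟩
      obtain ⟨n, hn0, hn⟩ := (IsPGroup.nontrivial_iff_card hNp).mp hNnt
      rw [hn]
      exact dvd_pow_self p hn0.ne'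
    obtain ⟨nb, hnbfix, hnbne⟩ :=
      hPQ.exists_fixed_point_of_prime_dvd_card_of_fixed_point N hpdvdN h1fix
    obtain ⟨x, hxC, hxeq⟩ := Subgroup.mem_map.mp nb.2
    have hxA : x ∉ A := by
      intro h
      apply hnbne
      apply Subtype.ext
      show (1 : P ⧸ A) = (nb : P ⧸ A)
      rw [← hxeq]
      exact ((QuotientGroup.eq_one_iff x).mpr h).symm
    have hcentral : ∀ g : P ⧸ A, g * π x * g⁻¹ = π x := by
      intro g
      have h1 := hnbfix g
      rw [smul_def] at h1
      have h2 := congrArg Subtype.val h1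
      rw [MulAut.conjNormal_apply] at h2
      rw [← hxeq] at h2
      exact h2
    set xq := π x with hxqdef
    set Zq := Subgroup.zpowers xq with hZqdef
    haveI hZnormal : Zq.Normal := by
      constructor
      intro w hw g
      obtain ⟨n, rfl⟩ := Subgroup.mem_zpowers_iff.mp hw
      have hcomm : Commute g xq := by
        have h0 := hcentral g
        rwa [mul_inv_eq_iff_eq_mul] at h0
      have h2 : g * xq ^ n * g⁻¹ = xq ^ n := by
        rw [mul_inv_eq_iff_eq_mul]
        exact (hcomm.zpow_right n).eq
      exact Subgroup.mem_zpowers_iff.mpr ⟨n, h2.symm⟩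
    set B := Subgroup.comap π Zq with hBdef
    have hBnormal : B.Normal := hZnormal.comap π
    have hABle : A ≤ B := by
      intro a ha
      show π a ∈ Zq
      have : π a = 1 := (QuotientGroup.eq_one_iff a).mpr ha
      rw [this]
      exact one_mem _
    have hxB : x ∈ B := Subgroup.mem_zpowers xq
    have hxcomm : ∀ a ∈ A, Commute x a := by
      intro a ha
      exact (Subgroup.mem_centralizer_iff.mp hxC a ha).symm
    have hBmem : ∀ b ∈ B, ∃ (n : ℤ) (a : P), a ∈ A ∧ b = x ^ n * a := by
      intro b hb
      obtain ⟨n, hn⟩ := hb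
      have hmk : ((x ^ n : P) : P ⧸ A) = ((b : P) : P ⧸ A) := by
        have : π (x ^ n) = π b := by
          rw [map_zpow]
          exact hn
        exact this
      have hmem : (x ^ n)⁻¹ * b ∈ A := QuotientGroup.eq.mp hmk
      exact ⟨n, (x ^ n)⁻¹ * b, hmem, by group⟩
    have hBcomm : IsMulCommutative B := by
      constructor
      constructor
      rintro ⟨b, hb⟩ ⟨c, hc⟩
      obtain ⟨n, a, haA, rfl⟩ := hBmem b hb
      obtain ⟨n', a', haA', rfl⟩ := hBmem c hc
      apply Subtype.ext
      show (x ^ n * a) * (x ^ n' * a') = (x ^ n' * a') * (x ^ n * a)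
      have c1 : Commute (x ^ n : P) (x ^ n') := (Commute.refl x).zpow_zpow n n'
      have c2 : Commute (x ^ n : P) a' := (hxcomm a' haA').zpow_left n
      have c3 : Commute a (x ^ n' : P) := ((hxcomm a haA).symm).zpow_right n'
      have c4 : Commute a a' := Subgroup.mul_comm_of_mem_isMulCommutative A haA haA'
      exact ((c1.mul_right c2).mul_left (c3.mul_right c4))
    have hBA := hmax B hBnormal hBcomm hABle
    rw [hBA] at hxB
    exact hxA hxB
  -- conjugation representation
  let φ : P →* MulAut A := MulAut.conjNormal
  have hker : ∀ g : P, φ g = 1 ↔ g ∈ A := by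
    intro g
    constructor
    · intro h
      rw [← hCA, hCdef, Subgroup.mem_centralizer_iff]
      intro a ha
      have h1 := DFunLike.congr_fun h (⟨a, ha⟩ : A)
      have h2 := congrArg Subtype.val h1
      rw [MulAut.conjNormal_apply] at h2
      simp only [MulAut.one_apply] at h2
      -- h2 : g * a * g⁻¹ = a
      calc a * g = (g * a * g⁻¹) * g := by rw [h2]
        _ = g * a := by group
    · intro hgA
      have hgC : g ∈ C := hAC hgA
      rw [hCdef, Subgroup.mem_centralizer_iff] at hgC
      ext a
      have h2 := hgC (a : P) a.2
      rw [MulAut.conjNormal_apply]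
      show g * (a : P) * g⁻¹ = (a : P)
      rw [← h2]
      group
  let ψ : P ⧸ A →* MulAut A := QuotientGroup.lift A φ (fun g hg => (hker g).mpr hg)
  have hψinj : Function.Injective ψ := by
    rw [injective_iff_map_eq_one]
    intro q hq
    obtain ⟨g, rfl⟩ := QuotientGroup.mk_surjective q
    have : φ g = 1 := hq
    rw [QuotientGroup.eq_one_iff]
    exact (hker g).mp this
  have hQcard : Nat.card (P ⧸ A) ≤ p ^ (m * (m - 1) / 2) := by
    letI : CommGroup A := { (inferInstance : Group A) with
      mul_comm := fun a b => Subtype.ext (Subgroup.mul_comm_of_mem_isMulCommutative A a.2 b.2) }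
    exact key_aux hp m A hcard (P ⧸ A) (hP.to_quotient A) ψ hψinj
  have hsplit : Nat.card P = Nat.card (P ⧸ A) * Nat.card A :=
    Subgroup.card_eq_card_quotient_mul_card_subgroup A
  calc Nat.card P = Nat.card (P ⧸ A) * Nat.card A := hsplit
    _ ≤ p ^ (m * (m - 1) / 2) * p ^ m := by
        rw [hcard]
        exact Nat.mul_le_mul_right _ hQcard
    _ = p ^ (m * (m - 1) / 2 + m) := (pow_add p _ _).symm
    _ = p ^ ((m + 1) * m / 2) := by rw [tri_step]
    _ = p ^ (m * (m + 1) / 2) := by rw [Nat.mul_comm (m + 1) m]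
end
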